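/- arXiv:2409.14099 — 4 statements merged into one kernel-verified Lean document; each statement's English description precedes it below -/
import Mathlib

section
/- Let I be a homogeneous saturated bi-ideal of H and let k be an integer with 0 < k < 2^{n−1}. If e_{2ⁿ−1−2k} ∈ I, then e_{2ⁿ−1−k} ∈ I (where e_a for even a is interpreted via the convention e_a = e_{2i−1}^{2^p} for a = 2^p(2i−1)). -/
open TensorProduct

noncomputable section
set_option synthInstance.maxHeartbeats 1000000
set_option maxHeartbeats 1000000
set_option linter.unusedSectionVars false

/-- The base ring `F₂[v]`. -/
abbrev RR : Type := Polynomial (ZMod 2)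

/-- Relations presenting the connective Morava K-theory `CK(n)*(SO_m)` of the split
special orthogonal group, with `s = ⌊(m-1)/2⌋`:  `e₀ = 0`, `eᵢ = 0` for `i > s`,
`eᵢ² = e_{2i}` for `i ≥ 1`, and `v·eᵢ = 0` for `i ≥ 2^n` (the last family is vacuous when
`m ≤ 2^(n+1)`). -/
def relSet (n s : ℕ) : Set (MvPolynomial ℕ RR) :=
  {MvPolynomial.X 0} ∪ {q | ∃ i : ℕ, s < i ∧ q = MvPolynomial.X i} ∪
    {q | ∃ i : ℕ, 1 ≤ i ∧ q = MvPolynomial.X i ^ 2 - MvPolynomial.X (2 * i)} ∪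
    {q | ∃ i : ℕ, 2 ^ n ≤ i ∧ q = MvPolynomial.C Polynomial.X * MvPolynomial.X i}

/-- The algebra `H = CK(n)*(SO_m)` (with `s = ⌊(m-1)/2⌋`), which for `m ≤ 2^(n+1)` is
`F₂[v][e₁,e₃,…,e_{2r-1}]/(e_{2i-1}^(2^{k_i}))`. -/
def Hso (n s : ℕ) : Type := MvPolynomial ℕ RR ⧸ Ideal.span (relSet n s)

instance (n s : ℕ) : CommRing (Hso n s) := Ideal.Quotient.commRing _
instance (n s : ℕ) : Algebra RR (Hso n s) := Ideal.Quotient.algebra _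
instance (n s : ℕ) : Algebra (ZMod 2) (Hso n s) := Ideal.Quotient.algebra _

/-- The element `e_a ∈ H`; for `a = 2^p·(2i-1)` it equals `e_{2i-1}^(2^p)`, and it is `0`
when the relevant odd index exceeds the number of generators. -/
def eso (n s : ℕ) (a : ℕ) : Hso n s := Ideal.Quotient.mk _ (MvPolynomial.X a)

lemma eso_gt (n s : ℕ) {i : ℕ} (h : s < i) : eso n s i = 0 := by
  rw [eso]; apply Ideal.Quotient.eq_zero_iff_mem.mpr
  exact Ideal.subset_span (Or.inl (Or.inl (Or.inr ⟨i, h, rfl⟩)))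

lemma eso_sq (n s : ℕ) {i : ℕ} (h : 1 ≤ i) : eso n s i ^ 2 = eso n s (2*i) := by
  have hm : (Ideal.Quotient.mk (Ideal.span (relSet n s)))
      (MvPolynomial.X i ^ 2 - MvPolynomial.X (2*i)) = 0 :=
    Ideal.Quotient.eq_zero_iff_mem.mpr
      (Ideal.subset_span (Or.inl (Or.inr ⟨i, h, rfl⟩)))
  rw [map_sub, map_pow, sub_eq_zero] at hm
  exact hm

lemma eso_pow (n s : ℕ) {i : ℕ} (h : 1 ≤ i) (c : ℕ) :
    eso n s i ^ (2^c) = eso n s (2^c * i) := by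
  induction c with
  | zero => simp
  | succ c ih =>
    have : (2:ℕ)^(c+1) * i = 2 * (2^c * i) := by ring
    rw [this, ← eso_sq n s (Nat.mul_pos (Nat.two_pow_pos c) h), ← ih, ← pow_mul, pow_succ]

lemma eso_integral (n s : ℕ) (i : ℕ) : IsIntegral RR (eso n s i) := by
  rcases Nat.eq_zero_or_pos i with rfl | hi
  · have : eso n s 0 = 0 := by
      rw [eso]; apply Ideal.Quotient.eq_zero_iff_mem.mpr
      exact Ideal.subset_span (Or.inl (Or.inl (Or.inl rfl)))
    rw [this]; exact isIntegral_zero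
  · refine ⟨Polynomial.X ^ (2^(s+1)), Polynomial.monic_X_pow _, ?_⟩
    have hz : eso n s (2^(s+1) * i) = 0 := by
      refine eso_gt n s ?_
      calc s < 2^(s+1) := by
              have : s < 2^s := Nat.lt_two_pow_self; omega
        _ ≤ 2^(s+1) * i := Nat.le_mul_of_pos_right _ hi
    rw [Polynomial.eval₂_X_pow, eso_pow n s hi, hz]

lemma Hso_adjoin (n s : ℕ) :
    Algebra.adjoin RR ((fun i => eso n s i) '' (Set.Iic s)) = ⊤ := by
  have hsurj : Function.Surjective (Ideal.Quotient.mkₐ RR (Ideal.span (relSet n s))) :=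
    Ideal.Quotient.mkₐ_surjective _ _
  have h1 : Algebra.adjoin RR
      ((Ideal.Quotient.mkₐ RR (Ideal.span (relSet n s))) ''
        (Set.range (MvPolynomial.X : ℕ → MvPolynomial ℕ RR))) = ⊤ := by
    rw [← AlgHom.map_adjoin, MvPolynomial.adjoin_range_X, Algebra.map_top,
      AlgHom.range_eq_top]
    exact hsurj
  rw [← top_le_iff]; refine le_trans h1.ge ?_
  apply Algebra.adjoin_le
  rintro x ⟨p, ⟨i, rfl⟩, rfl⟩
  rcases le_or_gt i s with hi | hi
  · exact Algebra.subset_adjoin ⟨i, hi, rfl⟩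
  · have : (Ideal.Quotient.mkₐ RR (Ideal.span (relSet n s))) (MvPolynomial.X i)
        = eso n s i := rfl
    rw [this, eso_gt n s hi]
    exact Subalgebra.zero_mem _

instance Hso_finite (n s : ℕ) : Module.Finite RR (Hso n s) := by
  have hfg : (Algebra.adjoin RR ((fun i => eso n s i) '' (Set.Iic s))).toSubmodule.FG :=
    fg_adjoin_of_finite ((Set.finite_Iic s).image _)
      (by rintro x ⟨i, _, rfl⟩; exact eso_integral n s i)
  rw [Hso_adjoin n s] at hfg
  exact ⟨by simpa using hfg⟩

lemma zmod2_coeff_one {q : RR} {j : ℕ} (h : j ∈ q.support) : q.coeff j = 1 := by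
  have h1 := Polynomial.mem_support_iff.mp h
  have h2 : ∀ u : ZMod 2, u = 0 ∨ u = 1 := by decide
  rcases h2 (q.coeff j) with h' | h' <;> simp_all

lemma qsmul_expand {n s : ℕ} (q : RR) (h : Hso n s) :
    q • h = ∑ j ∈ q.support, ((Polynomial.X : RR)^j) • h := by
  conv_lhs => rw [q.as_sum_support_C_mul_X_pow]
  rw [Finset.sum_smul]
  refine Finset.sum_congr rfl fun j hj => ?_
  rw [zmod2_coeff_one hj, map_one, one_mul]

section Graded
variable {n s : ℕ} (ℋ : ℤ → Submodule (ZMod 2) (Hso n s)) [DirectSum.Decomposition ℋ]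

def Dm (d₀ : ℤ) : Hso n s →+ Hso n s where
  toFun x := ((DirectSum.decompose ℋ x) d₀ : Hso n s)
  map_zero' := by simp
  map_add' x y := by simp

lemma hvpow (hv : ∀ (a : ℤ) (x : Hso n s), x ∈ ℋ a →
      (Polynomial.X : RR) • x ∈ ℋ (a + (1 - 2 ^ n))) {d : ℤ} {x : Hso n s} (hx : x ∈ ℋ d) (j : ℕ) :
    ((Polynomial.X : RR)^j) • x ∈ ℋ (d + j * (1 - 2^n)) := by
  induction j with
  | zero => simpa using hx
  | succ j ih =>
    have h1 := hv _ _ ih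
    rw [pow_succ', mul_smul]
    have he : d + ((j+1:ℕ):ℤ) * (1-2^n) = d + (j:ℤ)*(1-2^n) + (1-2^n) := by push_cast; ring
    rw [he]
    exact h1

lemma Dm_smul_of_ne (hv : ∀ (a : ℤ) (x : Hso n s), x ∈ ℋ a →
      (Polynomial.X : RR) • x ∈ ℋ (a + (1 - 2 ^ n))) {d : ℤ} {x : Hso n s} (hx : x ∈ ℋ d) (q : RR) {d₀ : ℤ}
    (h : ∀ j : ℕ, d + j * (1 - 2^n) ≠ d₀) : Dm ℋ d₀ (q • x) = 0 := by
  rw [qsmul_expand, map_sum]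
  apply Finset.sum_eq_zero
  intro j hj
  exact DirectSum.decompose_of_mem_ne ℋ (hvpow ℋ hv hx j) (h j)

lemma Dm_smul_of_eq (hv : ∀ (a : ℤ) (x : Hso n s), x ∈ ℋ a →
      (Polynomial.X : RR) • x ∈ ℋ (a + (1 - 2 ^ n))) (hn : 1 ≤ n) {d : ℤ} {x : Hso n s} (hx : x ∈ ℋ d) {q : RR} {j₀ : ℕ}
    (hj₀ : j₀ ∈ q.support) {d₀ : ℤ} (hd : d + j₀ * (1 - 2^n) = d₀) :
    Dm ℋ d₀ (q • x) = (Polynomial.X : RR)^j₀ • x := by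
  rw [qsmul_expand, map_sum]
  rw [Finset.sum_eq_single_of_mem j₀ hj₀]
  · exact DirectSum.decompose_of_mem_same ℋ (hd ▸ hvpow ℋ hv hx j₀)
  · intro j hj hne
    refine DirectSum.decompose_of_mem_ne ℋ (hvpow ℋ hv hx j) ?_
    intro hEq
    rw [← hd] at hEq
    have h2 : (2:ℤ)^n ≠ 1 := by
      have : (2:ℤ)^1 ≤ 2^n := pow_le_pow_right₀ (by norm_num) hn
      norm_num at this ⊢
      omega
    have : ((j:ℤ) - j₀) * (1 - 2^n) = 0 := by linarith
    rcases mul_eq_zero.mp this with h' | h'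
    · exact hne (by omega)
    · omega

lemma HsoProdMem (hone : (1:Hso n s) ∈ ℋ 0)
    (hmul : ∀ (a b : ℤ) (x y : Hso n s), x ∈ ℋ a → y ∈ ℋ b → x * y ∈ ℋ (a + b))
    (t : Finset ℕ) (f : ℕ → Hso n s) (df : ℕ → ℤ) (h : ∀ j ∈ t, f j ∈ ℋ (df j)) :
    (∏ j ∈ t, f j) ∈ ℋ (∑ j ∈ t, df j) := by
  induction t using Finset.induction with
  | empty => simpa using hone
  | insert _ _ hx ih =>
    rw [Finset.prod_insert hx, Finset.sum_insert hx]
    exact hmul _ _ _ _ (h _ (Finset.mem_insert_self _ _))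
      (ih fun j hj => h j (Finset.mem_insert_of_mem hj))

lemma eso_mem
    (hmul : ∀ (a b : ℤ) (x y : Hso n s), x ∈ ℋ a → y ∈ ℋ b → x * y ∈ ℋ (a + b))
    (hodd : ∀ b : ℕ, b % 2 = 1 → b ≤ s → eso n s b ∈ ℋ b) :
    ∀ a : ℕ, 1 ≤ a → eso n s a ∈ ℋ a := by
  intro a
  induction a using Nat.strong_induction_on with
  | _ a ih =>
    intro ha
    rcases Nat.even_or_odd a with he | ho
    · obtain ⟨b, rfl⟩ := he
      have hb : 1 ≤ b := by omega
      have hbb : b + b = 2 * b := by ring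
      rw [hbb, ← eso_sq n s hb, sq]
      have h1 := hmul b b _ _ (ih b (by omega) hb) (ih b (by omega) hb)
      convert h1 using 2
      push_cast [hbb]
      ring
    · rcases le_or_gt a s with h|h
      · exact hodd a (Nat.odd_iff.mp ho) h
      · rw [eso_gt n s h]; exact Submodule.zero_mem _

end Graded

lemma sum_two_pow_sub (i : ℕ) : (∑ j ∈ Finset.range i, 2^(i-j)) = 2^(i+1) - 2 := by
  induction i with
  | zero => simp
  | succ i ih =>
    rw [Finset.sum_range_succ']
    have h0 : ∀ j : ℕ, (i+1) - (j+1) = i - j := fun j => by omega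
    simp only [h0, Nat.sub_zero]
    rw [ih]
    have h1 : 1 ≤ 2^(i+1) := Nat.one_le_two_pow
    have h2 : (2:ℕ)^(i+2) = 2 * 2^(i+1) := by ring
    omega

lemma keyNT (n K : ℕ) (hK0 : 0 < K) (hK : K < 2^(n-1)) (i : ℕ) (hi1 : 1 ≤ i)
    (hKw : K = 2^i * (K / 2^i)) {t : Finset ℕ} (ht : t ⊆ Finset.range i) :
    (K/2^i) * (1 + ∑ j ∈ t, 2^(i-j)) ≠ K
    ∧ (K/2^i) * (1 + ∑ j ∈ t, 2^(i-j)) + 1 < K + 2^n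
    ∧ K + 1 < (K/2^i) * (1 + ∑ j ∈ t, 2^(i-j)) + 2^n := by
  set w := K / 2^i with hwdef
  set c := ∑ j ∈ t, 2^(i-j) with hcdef
  have hn1 : 1 ≤ n := by
    rcases n with _ | n
    · norm_num at hK; omega
    · omega
  have h2n : 2 * 2^(n-1) = 2^n := by
    have h' : n - 1 + 1 = n := by omega
    conv_rhs => rw [← h', pow_succ]
    ring
  have hw1 : 1 ≤ w := by
    rcases Nat.eq_zero_or_pos w with h | h
    · rw [h, Nat.mul_zero] at hKw; omega
    · exact h
  have h2i : (2:ℕ) ≤ 2^i := by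
    calc (2:ℕ) = 2^1 := by norm_num
    _ ≤ 2^i := Nat.pow_le_pow_right (by norm_num) hi1
  have hcle : c ≤ 2^(i+1) - 2 := by
    rw [hcdef, ← sum_two_pow_sub i]
    exact Finset.sum_le_sum_of_subset ht
  have h2i1 : (2:ℕ)^(i+1) = 2 * 2^i := by ring
  rcases Finset.decidableMem 0 t with h0 | h0
  -- 0 ∉ t
  · have hsub : t ⊆ (Finset.range i).erase 0 := by
      intro j hj
      exact Finset.mem_erase.mpr ⟨fun h => h0 (h ▸ hj), ht hj⟩
    have hce : c ≤ 2^i - 2 := by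
      have h1 : c ≤ ∑ j ∈ (Finset.range i).erase 0, 2^(i-j) :=
        Finset.sum_le_sum_of_subset hsub
      have h2 : ∑ j ∈ (Finset.range i).erase 0, 2^(i-j) + 2^(i-0)
          = ∑ j ∈ Finset.range i, 2^(i-j) :=
        Finset.sum_erase_add _ _ (Finset.mem_range.mpr (by omega))
      rw [sum_two_pow_sub i] at h2
      simp only [Nat.sub_zero] at h2
      omega
    have hle : w * (1 + c) ≤ w * (2^i - 1) := Nat.mul_le_mul_left w (by omega)
    have hA : w * (2^i - 1) + w = K := by
      have h3 : (2:ℕ)^i - 1 + 1 = 2^i := by omega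
      calc w * (2^i - 1) + w = w * ((2^i - 1) + 1) := by ring
      _ = w * 2^i := by rw [h3]
      _ = K := by rw [hKw]; ring
    refine ⟨by omega, by omega, by omega⟩
  -- 0 ∈ t
  · have hge : 2^i ≤ c := by
      have := Finset.single_le_sum (f := fun j => 2^(i-j))
        (fun j _ => Nat.zero_le _) h0
      simpa using this
    have hle : w * (1 + c) ≤ w * (2^(i+1) - 1) := Nat.mul_le_mul_left w (by omega)
    have hge2 : w * (1 + 2^i) ≤ w * (1 + c) := Nat.mul_le_mul_left w (by omega)
    have hA : w * (2^(i+1) - 1) + w = 2 * K := by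
      have h3 : (2:ℕ)^(i+1) - 1 + 1 = 2^(i+1) := by omega
      calc w * (2^(i+1) - 1) + w = w * ((2^(i+1) - 1) + 1) := by ring
      _ = w * 2^(i+1) := by rw [h3]
      _ = 2 * K := by rw [hKw]; ring
    have hB : w * (1 + 2^i) = w + K := by rw [hKw]; ring
    refine ⟨by omega, by omega, by omega⟩

lemma degree_ne (n K t₀ : ℕ) (hK0 : 0 < K) (hK : K < 2^(n-1))
    (i : ℕ) (hi1 : 1 ≤ i) (hdvd : 2^i ∣ K) {t : Finset ℕ} (ht : t ⊆ Finset.range i)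
    (jj : ℕ) :
    (((2^n - 1 - K/2^i : ℕ) : ℤ) + ∑ j ∈ t, ((2^n - 1 - K/2^j : ℕ) : ℤ))
        + (jj:ℤ) * (1 - 2^n)
      ≠ ((2^n - 1 - K : ℕ) : ℤ) + ((1:ℤ) + (t₀:ℤ)) * (1 - 2^n) := by
  intro heq
  have hn1 : 1 ≤ n := by
    rcases n with _ | n
    · norm_num at hK; omega
    · omega
  have h2n : 2 * 2^(n-1) = 2^n := by
    have h' : n - 1 + 1 = n := by omega
    conv_rhs => rw [← h', pow_succ]
    ring
  set w := K / 2^i with hwdef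
  have hKw : K = 2^i * w := by
    rw [hwdef, Nat.mul_div_cancel' hdvd]
  have hwle : w ≤ K := Nat.div_le_self _ _
  have hw1 : 1 ≤ w := by
    rcases Nat.eq_zero_or_pos w with h | h
    · rw [h, Nat.mul_zero] at hKw; omega
    · exact h
  -- rewrite each K / 2^j
  have hjt : ∀ j ∈ t, K / 2^j = 2^(i-j) * w := by
    intro j hj
    have hji : j < i := Finset.mem_range.mp (ht hj)
    have hsp : (2:ℕ)^j * 2^(i-j) = 2^i := by
      rw [← pow_add]
      congr 1
      omega
    have : K = 2^j * (2^(i-j) * w) := by rw [hKw, ← hsp]; ring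
    rw [this, Nat.mul_div_cancel_left _ (Nat.two_pow_pos j)]
  -- cast each summand
  have hcast : ∀ j ∈ t, ((2^n - 1 - K/2^j : ℕ) : ℤ)
      = ((2^n : ℕ) : ℤ) - 1 - ((2^(i-j) : ℕ) : ℤ) * (w:ℤ) := by
    intro j hj
    rw [hjt j hj]
    have hle : 2^(i-j) * w ≤ 2^(n-1) - 1 := by
      have := hjt j hj
      have h2 : K / 2^j ≤ K := Nat.div_le_self _ _
      omega
    have h1 : (1:ℕ) ≤ 2^n := Nat.one_le_two_pow
    push_cast [Nat.cast_sub (by omega : 2^(i-j)*w ≤ 2^n - 1), Nat.cast_sub h1]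
    ring
  rw [Finset.sum_congr rfl hcast] at heq
  rw [Finset.sum_sub_distrib, Finset.sum_sub_distrib, Finset.sum_const, ← Finset.sum_mul]
    at heq
  -- now relate to keyNT
  obtain ⟨hne, hlt1, hlt2⟩ := keyNT n K hK0 hK i hi1 hKw ht
  set u := w * (1 + ∑ j ∈ t, 2^(i-j)) with hudef
  have hucast : (u:ℤ) = (w:ℤ) * (1 + ∑ j ∈ t, ((2^(i-j):ℕ):ℤ)) := by
    rw [hudef]
    push_cast
    ring
  have hcast1 : ((2^n - 1 - w : ℕ) : ℤ) = ((2^n:ℕ):ℤ) - 1 - (w:ℤ) := by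
    have : w ≤ 2^n - 1 := by omega
    have h1 : (1:ℕ) ≤ 2^n := Nat.one_le_two_pow
    omega
  have hcast2 : ((2^n - 1 - K : ℕ) : ℤ) = ((2^n:ℕ):ℤ) - 1 - (K:ℤ) := by
    have h1 : (1:ℕ) ≤ 2^n := Nat.one_le_two_pow
    omega
  rw [hcast1, hcast2] at heq
  simp only [Finset.sum_const, nsmul_eq_mul, mul_one] at heq
  push_cast at heq hucast
  -- heq is now a linear relation over ℤ
  have hE : (K:ℤ) - (u:ℤ)
      = ((jj:ℤ) - (t₀:ℤ) - (t.card:ℤ) - 1) * ((2:ℤ)^n - 1) := by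
    rw [hucast]
    linear_combination heq
  have hn2 : 2 ≤ n := by
    by_contra h
    push_neg at h
    have hh : 2^(n-1) = 1 := by interval_cases n <;> norm_num
    omega
  have hM3 : (3:ℤ) ≤ (2:ℤ)^n - 1 := by
    have h4 : (2:ℤ)^2 ≤ 2^n := pow_le_pow_right₀ (by norm_num) hn2
    norm_num at h4
    omega
  have hneZ : (K:ℤ) ≠ (u:ℤ) := by exact_mod_cast Ne.symm hne
  have hlt1z : (u:ℤ) + 1 < (K:ℤ) + 2^n := by exact_mod_cast hlt1
  have hlt2z : (K:ℤ) + 1 < (u:ℤ) + 2^n := by exact_mod_cast hlt2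
  set E := (jj:ℤ) - (t₀:ℤ) - (t.card:ℤ) - 1 with hEdef
  rcases lt_trichotomy E 0 with hE0 | hE0 | hE0
  · have hle : E ≤ -1 := by omega
    have : E * ((2:ℤ)^n - 1) ≤ (-1) * ((2:ℤ)^n - 1) :=
      mul_le_mul_of_nonneg_right hle (by omega)
    -- K - u ≤ -(2^n - 1), but u < K + 2^n - 1
    omega
  · rw [hE0, zero_mul] at hE
    omega
  · have hge : 1 ≤ E := by omega
    have : 1 * ((2:ℤ)^n - 1) ≤ E * ((2:ℤ)^n - 1) :=
      mul_le_mul_of_nonneg_right hge (by omega)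
    omega

lemma degree_ne2 (n K t₀ : ℕ) (hK0 : 0 < K) (hK : K < 2^(n-1)) (jj : ℕ) :
    ((2^n - 1 - 2*K : ℕ) : ℤ) + (jj:ℤ) * (1 - 2^n)
      ≠ ((2^n - 1 - K : ℕ) : ℤ) + ((1:ℤ) + (t₀:ℤ)) * (1 - 2^n) := by
  intro heq
  have hn1 : 1 ≤ n := by
    rcases n with _ | n
    · norm_num at hK; omega
    · omega
  have h2n : 2 * 2^(n-1) = 2^n := by
    have h' : n - 1 + 1 = n := by omega
    conv_rhs => rw [← h', pow_succ]
    ring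
  have h1 : (1:ℕ) ≤ 2^n := Nat.one_le_two_pow
  have hc1 : ((2^n - 1 - 2*K : ℕ) : ℤ) = ((2^n:ℕ):ℤ) - 1 - 2*(K:ℤ) := by omega
  have hc2 : ((2^n - 1 - K : ℕ) : ℤ) = ((2^n:ℕ):ℤ) - 1 - (K:ℤ) := by omega
  rw [hc1, hc2] at heq
  push_cast at heq
  have hE : (K:ℤ) = ((1:ℤ) + (t₀:ℤ) - (jj:ℤ)) * ((2:ℤ)^n - 1) := by
    linear_combination -heq
  have hKz : (0:ℤ) < K := by exact_mod_cast hK0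
  have hKz2 : (K:ℤ) < 2^(n-1) := by exact_mod_cast hK
  have hMz : (K:ℤ) < (2:ℤ)^n - 1 := by
    have h2 : ((2 * 2^(n-1) : ℕ):ℤ) = ((2^n:ℕ):ℤ) := by rw [h2n]
    push_cast at h2
    omega
  set E := (1:ℤ) + (t₀:ℤ) - (jj:ℤ) with hEdef
  rcases lt_trichotomy E 0 with h | h | h
  · have : E * ((2:ℤ)^n - 1) ≤ (-1) * ((2:ℤ)^n - 1) :=
      mul_le_mul_of_nonneg_right (by omega) (by omega)
    omega
  · rw [h, zero_mul] at hE; omega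
  · have : 1 * ((2:ℤ)^n - 1) ≤ E * ((2:ℤ)^n - 1) :=
      mul_le_mul_of_nonneg_right (by omega) (by omega)
    omega

lemma hmain_gen {A : Type} [CommRing A] [Algebra RR A] [Module.Finite RR A] (I : Ideal A) (x : A) :
    (∃ r : RR, r ≠ 0 ∧ r • x ∈ I) ∨
      ∃ ℓ : A →ₗ[RR] RR, (∀ x ∈ I, ℓ x = 0) ∧ ℓ x ≠ 0 := by
  classical
  letI Isub : Submodule RR (A) := I.restrictScalars RR
  letI Mq := A ⧸ Isub
  letI Tq : Submodule RR Mq := Submodule.torsion RR Mq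
  haveI : Module.Finite RR Mq :=
    Module.Finite.of_surjective Isub.mkQ (Submodule.mkQ_surjective _)
  letI Aq := Mq ⧸ Tq
  haveI : Module.Finite RR Aq :=
    Module.Finite.of_surjective Tq.mkQ (Submodule.mkQ_surjective _)
  haveI : Module.Free RR Aq := Module.free_of_finite_type_torsion_free'
  set π : A →ₗ[RR] Aq := Tq.mkQ.comp Isub.mkQ with hπdef
  by_cases h0 : π (x) = 0
  · left
    have h1 : Isub.mkQ (x) ∈ Tq := by
      rw [← Submodule.Quotient.mk_eq_zero Tq]
      exact h0
    obtain ⟨⟨r, hr⟩, hrx⟩ := (Submodule.mem_torsion_iff _).mp h1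
    refine ⟨r, nonZeroDivisors.ne_zero hr, ?_⟩
    have h2 : Isub.mkQ (r • x) = 0 := by
      rw [map_smul]
      exact hrx
    rw [Submodule.mkQ_apply, Submodule.Quotient.mk_eq_zero] at h2
    exact h2
  · right
    set B := Module.Free.chooseBasis RR Aq with hBdef
    have hr0 : B.repr (π (x)) ≠ 0 := by
      intro h
      exact h0 (by rw [← (LinearEquiv.map_eq_zero_iff B.repr)]; exact h)
    obtain ⟨α, hα⟩ := Finsupp.ne_iff.mp hr0
    refine ⟨(B.coord α).comp π, ?_, ?_⟩
    · intro y hx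
      have hx0 : Isub.mkQ y = 0 := by
        rw [Submodule.mkQ_apply, Submodule.Quotient.mk_eq_zero]
        exact hx
      simp [hπdef, LinearMap.comp_apply, hx0]
    · simpa [Module.Basis.coord_apply] using hα

lemma tmul_expand_gen {A : Type} [CommRing A] [Algebra RR A] (a : A) (f : ℕ → A) (s : Finset ℕ) :
    (a ⊗ₜ[RR] a) * ∏ j ∈ s, (f j ⊗ₜ[RR] (1:A) + (1:A) ⊗ₜ[RR] f j)
      = ∑ t ∈ s.powerset, (a * ∏ j ∈ t, f j) ⊗ₜ[RR] (a * ∏ j ∈ s \ t, f j) := by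
  rw [Finset.prod_add, Finset.mul_sum]
  refine Finset.sum_congr rfl fun t ht => ?_
  have h1 : ∏ j ∈ t, (f j ⊗ₜ[RR] (1:A)) = (∏ j ∈ t, f j) ⊗ₜ[RR] (1:A) := by
    clear ht
    induction t using Finset.induction with
    | empty => rw [Finset.prod_empty, Finset.prod_empty]; rfl
    | insert _ _ hx ih =>
      rw [Finset.prod_insert hx, Finset.prod_insert hx, ih,
        Algebra.TensorProduct.tmul_mul_tmul, mul_one]
  have h2 : ∏ j ∈ s \ t, ((1:A) ⊗ₜ[RR] f j) = (1:A) ⊗ₜ[RR] (∏ j ∈ s \ t, f j) := by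
    induction (s \ t) using Finset.induction with
    | empty => rw [Finset.prod_empty, Finset.prod_empty]; rfl
    | insert _ _ hx ih =>
      rw [Finset.prod_insert hx, Finset.prod_insert hx, ih,
        Algebra.TensorProduct.tmul_mul_tmul, one_mul]
  rw [h1, h2, Algebra.TensorProduct.tmul_mul_tmul, mul_one, one_mul,
    Algebra.TensorProduct.tmul_mul_tmul]

/-- **Restrictions on the `J`-invariant** (Proposition `restrictions2`, Appendix A3).
Fix `n ≥ 1` and `3 ≤ m ≤ 2^(n+1)`; let `H = CK(n)*(SO_m)` be the graded `F₂[v]`-bialgebra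
described above, let `I` be a homogeneous saturated bi-ideal of `H`, and let `K` be an
integer with `0 < K < 2^(n-1)`.  If `e_{2^n - 1 - 2K} ∈ I` then `e_{2^n - 1 - K} ∈ I`. -/
theorem stmt3 (n m : ℕ) (hn : 1 ≤ n) (hm3 : 3 ≤ m) (hm : m ≤ 2 ^ (n + 1))
    (ℋ : ℤ → Submodule (ZMod 2) (Hso n ((m - 1) / 2))) [DirectSum.Decomposition ℋ]
    (hone : (1 : Hso n ((m - 1) / 2)) ∈ ℋ 0)
    (hmul : ∀ (a b : ℤ) (x y : Hso n ((m - 1) / 2)),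
      x ∈ ℋ a → y ∈ ℋ b → x * y ∈ ℋ (a + b))
    (hv : ∀ (a : ℤ) (x : Hso n ((m - 1) / 2)), x ∈ ℋ a →
      (Polynomial.X : RR) • x ∈ ℋ (a + (1 - 2 ^ n)))
    (hedeg : ∀ i : ℕ, 1 ≤ i → i ≤ (m + 1) / 4 →
      eso n ((m - 1) / 2) (2 * i - 1) ∈ ℋ ((2 * i : ℤ) - 1))
    (Δ : Hso n ((m - 1) / 2) →ₐ[RR] Hso n ((m - 1) / 2) ⊗[RR] Hso n ((m - 1) / 2))
    (ε : Hso n ((m - 1) / 2) →ₐ[RR] RR)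
    (hcoassoc : ∀ x : Hso n ((m - 1) / 2),
      (TensorProduct.assoc RR (Hso n ((m - 1) / 2)) (Hso n ((m - 1) / 2))
            (Hso n ((m - 1) / 2)))
          ((TensorProduct.map Δ.toLinearMap
            (LinearMap.id : Hso n ((m - 1) / 2) →ₗ[RR] Hso n ((m - 1) / 2))) (Δ x)) =
        (TensorProduct.map
          (LinearMap.id : Hso n ((m - 1) / 2) →ₗ[RR] Hso n ((m - 1) / 2))
          Δ.toLinearMap) (Δ x))
    (hcounitl : ∀ x : Hso n ((m - 1) / 2),
      (TensorProduct.lid RR (Hso n ((m - 1) / 2)))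
        ((TensorProduct.map ε.toLinearMap
          (LinearMap.id : Hso n ((m - 1) / 2) →ₗ[RR] Hso n ((m - 1) / 2))) (Δ x)) = x)
    (hcounitr : ∀ x : Hso n ((m - 1) / 2),
      (TensorProduct.rid RR (Hso n ((m - 1) / 2)))
        ((TensorProduct.map
          (LinearMap.id : Hso n ((m - 1) / 2) →ₗ[RR] Hso n ((m - 1) / 2))
          ε.toLinearMap) (Δ x)) = x)
    (hεe : ∀ i : ℕ, 1 ≤ i → ε (eso n ((m - 1) / 2) i) = 0)
    (hΔtop : Δ (eso n ((m - 1) / 2) (2 ^ n - 1)) =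
      eso n ((m - 1) / 2) (2 ^ n - 1) ⊗ₜ[RR] 1 + 1 ⊗ₜ[RR] eso n ((m - 1) / 2) (2 ^ n - 1) +
        (Polynomial.X : RR) •
          (eso n ((m - 1) / 2) (2 ^ n - 1) ⊗ₜ[RR] eso n ((m - 1) / 2) (2 ^ n - 1)))
    (hΔ : ∀ k : ℕ, 0 < k → 2 * k < 2 ^ n →
      Δ (eso n ((m - 1) / 2) (2 ^ n - 1 - 2 * k)) =
        eso n ((m - 1) / 2) (2 ^ n - 1 - 2 * k) ⊗ₜ[RR] 1 +
          1 ⊗ₜ[RR] eso n ((m - 1) / 2) (2 ^ n - 1 - 2 * k) +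
          ∑ i ∈ Finset.range (padicValNat 2 k + 1),
            ((Polynomial.X : RR) ^ (i + 1)) •
              ((eso n ((m - 1) / 2) (2 ^ n - 1 - k / 2 ^ i) ⊗ₜ[RR]
                  eso n ((m - 1) / 2) (2 ^ n - 1 - k / 2 ^ i)) *
                ∏ j ∈ Finset.range i,
                  (eso n ((m - 1) / 2) (2 ^ n - 1 - k / 2 ^ j) ⊗ₜ[RR]
                      (1 : Hso n ((m - 1) / 2)) +
                    (1 : Hso n ((m - 1) / 2)) ⊗ₜ[RR]
                      eso n ((m - 1) / 2) (2 ^ n - 1 - k / 2 ^ j))))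
    (I : Ideal (Hso n ((m - 1) / 2)))
    (hIhom : ∀ x ∈ I, ∀ d : ℤ, ((DirectSum.decompose ℋ x) d : Hso n ((m - 1) / 2)) ∈ I)
    (hIsat : ∀ x : Hso n ((m - 1) / 2), (Polynomial.X : RR) • x ∈ I → x ∈ I)
    (hIΔ : ∀ x ∈ I, Δ x ∈ Submodule.span RR
      {z : Hso n ((m - 1) / 2) ⊗[RR] Hso n ((m - 1) / 2) |
        ∃ a ∈ I, ∃ b : Hso n ((m - 1) / 2), z = a ⊗ₜ[RR] b ∨ z = b ⊗ₜ[RR] a})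
    (hIε : ∀ x ∈ I, ε x = 0)
    (K : ℕ) (hK0 : 0 < K) (hK : K < 2 ^ (n - 1))
    (hin : eso n ((m - 1) / 2) (2 ^ n - 1 - 2 * K) ∈ I) :
    eso n ((m - 1) / 2) (2 ^ n - 1 - K) ∈ I := by
  have hn2 : 2 ≤ n := by
    by_contra h
    push_neg at h
    have hh : 2^(n-1) = 1 := by interval_cases n <;> norm_num
    omega
  have h2n : 2 * 2^(n-1) = 2^n := by
    have h' : n - 1 + 1 = n := by omega
    conv_rhs => rw [← h', pow_succ]
    ring
  -- homogeneity of every eso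
  have hodd : ∀ b : ℕ, b % 2 = 1 → b ≤ (m-1)/2 → eso n ((m-1)/2) b ∈ ℋ b := by
    intro b hb hbs
    have hi := hedeg ((b+1)/2) (by omega) (by omega)
    have h1 : 2 * ((b+1)/2) - 1 = b := by omega
    rw [h1] at hi
    have h2 : ((2 * (((b+1)/2 : ℕ)) : ℤ) - 1) = (b:ℤ) := by omega
    rwa [h2] at hi
  have hmem : ∀ a : ℕ, 1 ≤ a → eso n ((m-1)/2) a ∈ ℋ a := eso_mem ℋ hmul hodd
  -- saturation for powers of v
  have satpow : ∀ (p : ℕ) (x : Hso n ((m-1)/2)), (Polynomial.X : RR)^p • x ∈ I → x ∈ I := by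
    intro p
    induction p with
    | zero => intro x hx; simpa using hx
    | succ p ih =>
      intro x hx
      rw [pow_succ, mul_smul] at hx
      exact hIsat x (ih _ hx)
  -- homogeneous torsion elements are in I
  have htor : ∀ (d : ℤ) (x : Hso n ((m-1)/2)), x ∈ ℋ d → ∀ r : RR, r ≠ 0 → r • x ∈ I → x ∈ I := by
    intro d x hx r hr hrx
    obtain ⟨j₀, hj₀⟩ := Polynomial.support_nonempty.mpr hr
    have hD := hIhom _ hrx (d + (j₀:ℤ) * (1 - 2^n))
    have heq : ((DirectSum.decompose ℋ (r • x)) (d + (j₀:ℤ) * (1 - 2^n)) : Hso n ((m-1)/2))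
        = Dm ℋ (d + (j₀:ℤ) * (1 - 2^n)) (r • x) := rfl
    rw [heq, Dm_smul_of_eq ℋ hv (by omega) hx hj₀ rfl] at hD
    exact satpow j₀ x hD
  -- main dichotomy from module theory over the PID RR
  have hmain : (∃ r : RR, r ≠ 0 ∧ r • eso n ((m-1)/2) (2^n - 1 - K) ∈ I) ∨
      ∃ ℓ : Hso n ((m-1)/2) →ₗ[RR] RR, (∀ x ∈ I, ℓ x = 0) ∧ ℓ (eso n ((m-1)/2) (2^n - 1 - K)) ≠ 0 := by
    exact hmain_gen I _
  rcases hmain with ⟨r, hr, hrx⟩ | ⟨ℓ, hℓI, hc⟩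
  · exact htor _ _ (hmem _ (by omega)) r hr hrx
  · obtain ⟨t₀, ht₀⟩ := Polynomial.support_nonempty.mpr hc
    obtain ⟨Ψ, hΨt⟩ : ∃ Ψ : (Hso n ((m-1)/2)) ⊗[RR] (Hso n ((m-1)/2)) →ₗ[RR] Hso n ((m-1)/2),
        ∀ x y : Hso n ((m-1)/2), Ψ (x ⊗ₜ[RR] y) = ℓ y • x :=
      ⟨(TensorProduct.rid RR _).toLinearMap.comp (TensorProduct.map LinearMap.id ℓ),
        fun x y => by simp [TensorProduct.map_tmul, TensorProduct.rid_tmul]⟩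
    have h2K : 2 * K < 2^n := by omega
    have hΨI : Ψ (Δ (eso n ((m-1)/2) (2^n - 1 - 2*K))) ∈ I := by
      refine Submodule.span_induction ?_ ?_ ?_ ?_ (hIΔ _ hin)
      · rintro z ⟨a, ha, b, hz | hz⟩ <;> subst hz <;> rw [hΨt]
        · rw [show ℓ b • a = algebraMap RR _ (ℓ b) * a from Algebra.smul_def _ _]
          exact I.mul_mem_left _ ha
        · rw [hℓI a ha, zero_smul]
          exact I.zero_mem
      · rw [map_zero]; exact I.zero_mem
      · intro x y _ _ hx hy
        rw [map_add]; exact I.add_mem hx hy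
      · intro r x _ hx
        rw [map_smul, show r • Ψ x = algebraMap RR _ r * Ψ x from Algebra.smul_def _ _]; exact I.mul_mem_left _ hx
    have hexp : Ψ (Δ (eso n ((m-1)/2) (2^n - 1 - 2*K)))
        = ℓ 1 • eso n ((m-1)/2) (2^n - 1 - 2*K)
          + ℓ (eso n ((m-1)/2) (2^n - 1 - 2*K)) • (1 : Hso n ((m-1)/2))
          + ∑ i ∈ Finset.range (padicValNat 2 K + 1),
              ∑ t ∈ (Finset.range i).powerset,
                ((Polynomial.X : RR)^(i+1)
                    * ℓ (eso n ((m-1)/2) (2^n - 1 - K / 2^i)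
                        * ∏ j ∈ Finset.range i \ t, eso n ((m-1)/2) (2^n - 1 - K / 2^j)))
                  • (eso n ((m-1)/2) (2^n - 1 - K / 2^i)
                      * ∏ j ∈ t, eso n ((m-1)/2) (2^n - 1 - K / 2^j)) := by
      rw [hΔ K hK0 h2K, map_add, map_add, hΨt, hΨt, map_sum]
      congr 1
      refine Finset.sum_congr rfl fun i _ => ?_
      rw [map_smul]
      have hprod : (eso n ((m-1)/2) (2^n-1-K/2^i) ⊗ₜ[RR] eso n ((m-1)/2) (2^n-1-K/2^i))
            * ∏ j ∈ Finset.range i,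
                (eso n ((m-1)/2) (2^n-1-K/2^j) ⊗ₜ[RR] (1:Hso n ((m-1)/2))
                  + (1:Hso n ((m-1)/2)) ⊗ₜ[RR] eso n ((m-1)/2) (2^n-1-K/2^j))
          = ∑ t ∈ (Finset.range i).powerset,
              (eso n ((m-1)/2) (2^n-1-K/2^i) * ∏ j ∈ t, eso n ((m-1)/2) (2^n-1-K/2^j))
                ⊗ₜ[RR] (eso n ((m-1)/2) (2^n-1-K/2^i)
                  * ∏ j ∈ Finset.range i \ t, eso n ((m-1)/2) (2^n-1-K/2^j)) := by
        exact tmul_expand_gen _ (fun j => eso n ((m-1)/2) (2^n-1-K/2^j)) _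
      rw [hprod, map_sum, Finset.smul_sum]
      refine Finset.sum_congr rfl fun t ht => ?_
      rw [hΨt, smul_smul]
    have hDI := hIhom _ hΨI (((2^n - 1 - K : ℕ) : ℤ) + ((1:ℤ) + (t₀:ℤ)) * (1 - 2^n))
    have hDm : ((DirectSum.decompose ℋ (Ψ (Δ (eso n ((m-1)/2) (2^n-1-2*K)))))
          (((2^n - 1 - K : ℕ) : ℤ) + ((1:ℤ) + (t₀:ℤ)) * (1 - 2^n)) : Hso n ((m-1)/2))
        = Dm ℋ (((2^n - 1 - K : ℕ) : ℤ) + ((1:ℤ) + (t₀:ℤ)) * (1 - 2^n))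
            (Ψ (Δ (eso n ((m-1)/2) (2^n-1-2*K)))) := rfl
    rw [hDm, hexp, map_add, map_add] at hDI
    have hp1 : Dm ℋ (((2^n - 1 - K : ℕ) : ℤ) + ((1:ℤ) + (t₀:ℤ)) * (1 - 2^n))
        (ℓ 1 • eso n ((m-1)/2) (2^n - 1 - 2*K)) = 0 :=
      Dm_smul_of_ne ℋ hv (hmem _ (by omega)) (ℓ 1)
        (fun jj => degree_ne2 n K t₀ hK0 hK jj)
    have hp2 : Dm ℋ (((2^n - 1 - K : ℕ) : ℤ) + ((1:ℤ) + (t₀:ℤ)) * (1 - 2^n))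
        (ℓ (eso n ((m-1)/2) (2^n - 1 - 2*K)) • (1 : Hso n ((m-1)/2))) = 0 := by
      rw [hℓI _ hin, zero_smul, map_zero]
    have hsum : Dm ℋ (((2^n - 1 - K : ℕ) : ℤ) + ((1:ℤ) + (t₀:ℤ)) * (1 - 2^n))
        (∑ i ∈ Finset.range (padicValNat 2 K + 1),
          ∑ t ∈ (Finset.range i).powerset,
            ((Polynomial.X : RR)^(i+1)
                * ℓ (eso n ((m-1)/2) (2^n - 1 - K / 2^i)
                    * ∏ j ∈ Finset.range i \ t, eso n ((m-1)/2) (2^n - 1 - K / 2^j)))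
              • (eso n ((m-1)/2) (2^n - 1 - K / 2^i)
                  * ∏ j ∈ t, eso n ((m-1)/2) (2^n - 1 - K / 2^j)))
        = (Polynomial.X : RR)^(t₀+1) • eso n ((m-1)/2) (2^n - 1 - K) := by
      rw [map_sum]
      rw [Finset.sum_eq_single_of_mem 0 (Finset.mem_range.mpr (Nat.succ_pos _)) ?_]
      · rw [Finset.range_zero, Finset.powerset_empty, Finset.sum_singleton]
        simp only [Finset.prod_empty, mul_one, Finset.sdiff_empty, Finset.empty_sdiff,
          pow_zero, Nat.div_one, zero_add, pow_one]
        refine Dm_smul_of_eq ℋ hv (by omega) (hmem _ (by omega)) ?_ ?_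
        · rw [Polynomial.mem_support_iff]
          rw [show t₀ + 1 = t₀ + 1 from rfl, Polynomial.coeff_X_mul]
          exact Polynomial.mem_support_iff.mp ht₀
        · push_cast
          ring
      · intro i hi hne0
        rw [map_sum]
        apply Finset.sum_eq_zero
        intro t ht
        have hti : t ⊆ Finset.range i := Finset.mem_powerset.mp ht
        have hdvd : 2^i ∣ K := dvd_trans
          (pow_dvd_pow 2 (by have := Finset.mem_range.mp hi; omega))
          pow_padicValNat_dvd
        have hd1 : (1:ℕ) ≤ 2^n - 1 - K/2^i := by
          have := Nat.div_le_self K (2^i); omega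
        have hmemh : eso n ((m-1)/2) (2^n-1-K/2^i) * ∏ j ∈ t, eso n ((m-1)/2) (2^n-1-K/2^j)
            ∈ ℋ (((2^n-1-K/2^i : ℕ):ℤ) + ∑ j ∈ t, ((2^n-1-K/2^j : ℕ):ℤ)) := by
          refine hmul _ _ _ _ (hmem _ hd1)
            (HsoProdMem ℋ hone hmul t _ _ fun j hj => hmem _ ?_)
          have := Nat.div_le_self K (2^j); omega
        exact Dm_smul_of_ne ℋ hv hmemh _
          (degree_ne n K t₀ hK0 hK i (by omega) hdvd hti)
    rw [hp1, hp2, hsum, zero_add, zero_add] at hDI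
    exact satpow (t₀+1) _ hDI

end
end

section
/- The only idempotent elements of A are 0, 1, v^{−1}·α_{2ⁿ−1}, and 1 + v^{−1}·α_{2ⁿ−1}, where α_{2ⁿ−1} is the basis element corresponding to the index i = 2^{n−1}. -/
open scoped Classical

noncomputable section

/-- The base ring `F₂[v, v⁻¹]` of Laurent polynomials over `F₂`. -/
abbrev LL : Type := LaurentPolynomial (ZMod 2)

/-- `k_i = ⌊log₂((2^(n+1) - 2)/(2i - 1))⌋` (the index `i : Fin (2^(n-1))` corresponds
to `i + 1 ∈ {1, …, 2^(n-1)}`). -/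
abbrev kfun (n : ℕ) (i : Fin (2 ^ (n - 1))) : ℕ :=
  Nat.log 2 ((2 ^ (n + 1) - 2) / (2 * (i : ℕ) + 1))

/-- Exponent tuples indexing the basis of `K(n)*(SO_{2^(n+1)-1})^∨`. -/
abbrev MIdx (n : ℕ) : Type := {t : Fin (2 ^ (n - 1)) → ℕ // ∀ i, t i < 2 ^ kfun n i}

/-- The zero tuple (indexing the unit of the algebra). -/
def zeroIdx (n : ℕ) : MIdx n := ⟨fun _ => 0, fun _ => pow_pos (by norm_num) _⟩

/-- The tuple with a `1` in position `l₀` and `0` elsewhere: it indexes the basis element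
`α_{2l₀+1}`. -/
def oneIdx (n : ℕ) (hk : ∀ i, 1 ≤ kfun n i) (l₀ : Fin (2 ^ (n - 1))) : MIdx n :=
  ⟨fun i => if i = l₀ then 1 else 0, by
    intro i
    have h2 : 1 < 2 ^ kfun n i := Nat.one_lt_two_pow_iff.mpr (by have := hk i; omega)
    dsimp only
    split
    · exact h2
    · exact lt_trans Nat.zero_lt_one h2⟩

/-- Given a tuple `t`, the tuple `u` with `u_{j(i)} = 1` for every `i` with `t_i ≠ 0` and
all other entries `0`. -/
def uIdx (n : ℕ) (hk : ∀ i, 1 ≤ kfun n i)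
    (jf : Fin (2 ^ (n - 1)) → Fin (2 ^ (n - 1))) (t : MIdx n) : MIdx n :=
  ⟨fun l => if ∃ i, t.1 i ≠ 0 ∧ jf i = l then 1 else 0, by
    intro l
    have h2 : 1 < 2 ^ kfun n l := Nat.one_lt_two_pow_iff.mpr (by have := hk l; omega)
    dsimp only
    split
    · exact h2
    · exact lt_trans Nat.zero_lt_one h2⟩

/-- The index `i = 2^(n-1)` (in `Fin` numbering, `2^(n-1) - 1`), corresponding to the
basis element `α_{2^n - 1}`. -/
def lastIdx (n : ℕ) : Fin (2 ^ (n - 1)) :=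
  ⟨2 ^ (n - 1) - 1, Nat.sub_lt (pow_pos (by norm_num) _) Nat.zero_lt_one⟩

-- AUX SECTION
section Aux

variable (n : ℕ)

/-- admissibility -/
def Adm (t : MIdx n) : Prop := ∀ i, t.1 i = 0 ∨ t.1 i = 2 ^ (kfun n i - 1)

lemma uIdx_apply (hk : ∀ i, 1 ≤ kfun n i) (jf : Fin (2 ^ (n - 1)) → Fin (2 ^ (n - 1)))
    (t : MIdx n) (l : Fin (2 ^ (n - 1))) :
    (uIdx n hk jf t).1 l = if ∃ i, t.1 i ≠ 0 ∧ jf i = l then 1 else 0 := rfl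

lemma oneIdx_apply (hk : ∀ i, 1 ≤ kfun n i) (l₀ i : Fin (2 ^ (n - 1))) :
    (oneIdx n hk l₀).1 i = if i = l₀ then 1 else 0 := rfl

lemma pow_mul_two (hn : 1 ≤ n) : 2 ^ (n - 1) * 2 = 2 ^ n := by
  obtain ⟨m, rfl⟩ : ∃ m, n = m + 1 := ⟨n - 1, by omega⟩
  simp [pow_succ]

lemma lastIdx_val : ((lastIdx n : Fin (2 ^ (n-1))) : ℕ) = 2 ^ (n - 1) - 1 := rfl

lemma last_facts (hn : 1 ≤ n) (hk : ∀ i, 1 ≤ kfun n i)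
    (jf : Fin (2 ^ (n - 1)) → Fin (2 ^ (n - 1)))
    (hjf : ∀ i, 2 * ((jf i : ℕ) + 1) + 2 ^ n = (2 * (i : ℕ) + 1) * 2 ^ kfun n i + 2) :
    kfun n (lastIdx n) = 1 ∧ jf (lastIdx n) = lastIdx n := by
  have h := hjf (lastIdx n)
  have hp : 1 ≤ 2 ^ (n - 1) := Nat.one_le_two_pow
  have h2p := pow_mul_two n hn
  rw [lastIdx_val] at h
  have hjlt : ((jf (lastIdx n) : Fin _) : ℕ) < 2 ^ (n - 1) := (jf (lastIdx n)).isLt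
  have hk1 : 1 ≤ kfun n (lastIdx n) := hk _
  have hkeq : kfun n (lastIdx n) = 1 := by
    by_contra hne
    have hk2 : 2 ≤ kfun n (lastIdx n) := by omega
    have h4 : 4 ≤ 2 ^ kfun n (lastIdx n) := by
      calc (4:ℕ) = 2 ^ 2 := by norm_num
      _ ≤ 2 ^ kfun n (lastIdx n) := Nat.pow_le_pow_right (by norm_num) hk2
    have hmul : (2 * (2 ^ (n-1) - 1) + 1) * 4 ≤ (2 * (2 ^ (n-1) - 1) + 1) * 2 ^ kfun n (lastIdx n) :=
      Nat.mul_le_mul_left _ h4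
    generalize hX : (2 * (2 ^ (n-1) - 1) + 1) * 2 ^ kfun n (lastIdx n) = X at h hmul
    omega
  refine ⟨hkeq, ?_⟩
  rw [hkeq, pow_one] at h
  apply Fin.ext
  rw [lastIdx_val]
  omega

lemma doubling (hn : 1 ≤ n)
    (jf : Fin (2 ^ (n - 1)) → Fin (2 ^ (n - 1)))
    (hjf : ∀ i, 2 * ((jf i : ℕ) + 1) + 2 ^ n = (2 * (i : ℕ) + 1) * 2 ^ kfun n i + 2)
    (i : Fin (2 ^ (n - 1))) (hk1 : kfun n i = 1) :
    (2 ^ (n-1) - 1) - ((jf i : Fin _) : ℕ) = 2 * ((2 ^ (n-1) - 1) - (i : ℕ)) := by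
  have h := hjf i
  rw [hk1, pow_one] at h
  have h2p := pow_mul_two n hn
  have hilt : (i : ℕ) < 2 ^ (n - 1) := i.isLt
  have hjlt : ((jf i : Fin _) : ℕ) < 2 ^ (n - 1) := (jf i).isLt
  omega

lemma iter_doubling (hn : 1 ≤ n)
    (jf : Fin (2 ^ (n - 1)) → Fin (2 ^ (n - 1)))
    (hjf : ∀ i, 2 * ((jf i : ℕ) + 1) + 2 ^ n = (2 * (i : ℕ) + 1) * 2 ^ kfun n i + 2) :
    ∀ (m : ℕ) (i : Fin (2 ^ (n - 1))), (∀ l ≤ m, kfun n (jf^[l] i) = 1) →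
      (2 ^ (n-1) - 1) - ((jf^[m] i : Fin _) : ℕ) = 2 ^ m * ((2 ^ (n-1) - 1) - (i : ℕ)) := by
  intro m
  induction m with
  | zero => intro i _; simp
  | succ m ih =>
    intro i hch
    rw [Function.iterate_succ_apply',
      doubling n hn jf hjf _ (hch m (Nat.le_succ m)),
      ih i (fun l hl => hch l (le_trans hl (Nat.le_succ m)))]
    ring

lemma uIdx_inj (hk : ∀ i, 1 ≤ kfun n i) (jf : Fin (2 ^ (n - 1)) → Fin (2 ^ (n - 1)))
    (hjinj : Function.Injective jf) {w w' : MIdx n}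
    (hA : Adm n w) (hA' : Adm n w') (h : uIdx n hk jf w = uIdx n hk jf w') : w = w' := by
  have hsupp : ∀ i, w.1 i ≠ 0 → w'.1 i ≠ 0 := by
    intro i hi
    have h1 : (uIdx n hk jf w).1 (jf i) = 1 := by
      rw [uIdx_apply, if_pos ⟨i, hi, rfl⟩]
    rw [h, uIdx_apply] at h1
    by_contra hno
    rw [if_neg ?_] at h1
    · exact absurd h1 (by norm_num)
    · rintro ⟨i', hi', hji'⟩
      exact (hjinj hji' ▸ hi') hno
  have hsupp' : ∀ i, w'.1 i ≠ 0 → w.1 i ≠ 0 := by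
    intro i hi
    have h1 : (uIdx n hk jf w').1 (jf i) = 1 := by
      rw [uIdx_apply, if_pos ⟨i, hi, rfl⟩]
    rw [← h, uIdx_apply] at h1
    by_contra hno
    rw [if_neg ?_] at h1
    · exact absurd h1 (by norm_num)
    · rintro ⟨i', hi', hji'⟩
      exact (hjinj hji' ▸ hi') hno
  apply Subtype.ext
  funext i
  rcases hA i with h0 | hp
  · rcases hA' i with h0' | hp'
    · rw [h0, h0']
    · by_contra _
      have := hsupp' i (by rw [hp']; positivity)
      exact this h0
  · have hne : w.1 i ≠ 0 := by rw [hp]; positivity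
    have hne' := hsupp i hne
    rcases hA' i with h0' | hp'
    · exact absurd h0' hne'
    · rw [hp, hp']

lemma uIdx_zero (hk : ∀ i, 1 ≤ kfun n i) (jf : Fin (2 ^ (n - 1)) → Fin (2 ^ (n - 1))) :
    uIdx n hk jf (zeroIdx n) = zeroIdx n := by
  apply Subtype.ext
  funext l
  rw [uIdx_apply, if_neg]
  · rfl
  · rintro ⟨i, hi, -⟩
    exact hi rfl

lemma uIdx_eq_zero (hk : ∀ i, 1 ≤ kfun n i) (jf : Fin (2 ^ (n - 1)) → Fin (2 ^ (n - 1)))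
    {w : MIdx n} (h : uIdx n hk jf w = zeroIdx n) : w = zeroIdx n := by
  apply Subtype.ext
  funext i
  by_contra hi
  have h1 : (uIdx n hk jf w).1 (jf i) = 1 := by
    rw [uIdx_apply, if_pos ⟨i, hi, rfl⟩]
  rw [h] at h1
  exact absurd h1 (by norm_num [zeroIdx])

lemma uIdx_one (hk : ∀ i, 1 ≤ kfun n i) (jf : Fin (2 ^ (n - 1)) → Fin (2 ^ (n - 1)))
    (hlast : jf (lastIdx n) = lastIdx n) :
    uIdx n hk jf (oneIdx n hk (lastIdx n)) = oneIdx n hk (lastIdx n) := by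
  apply Subtype.ext
  funext l
  rw [uIdx_apply, oneIdx_apply]
  by_cases hl : l = lastIdx n
  · rw [if_pos hl, if_pos]
    exact ⟨lastIdx n, by rw [oneIdx_apply, if_pos rfl]; norm_num, by rw [hlast, hl]⟩
  · rw [if_neg hl, if_neg]
    rintro ⟨i, hi, hji⟩
    rw [oneIdx_apply] at hi
    by_cases hil : i = lastIdx n
    · subst hil
      rw [hlast] at hji
      exact hl hji.symm
    · rw [if_neg hil] at hi
      exact hi rfl

lemma uIdx_eq_one (hk : ∀ i, 1 ≤ kfun n i) (jf : Fin (2 ^ (n - 1)) → Fin (2 ^ (n - 1)))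
    (hjinj : Function.Injective jf) (hklast : kfun n (lastIdx n) = 1)
    (hlast : jf (lastIdx n) = lastIdx n) {w : MIdx n} (hA : Adm n w)
    (h : uIdx n hk jf w = oneIdx n hk (lastIdx n)) : w = oneIdx n hk (lastIdx n) := by
  have hsupp : ∀ i, w.1 i ≠ 0 → i = lastIdx n := by
    intro i hi
    have h1 : (uIdx n hk jf w).1 (jf i) = 1 := by
      rw [uIdx_apply, if_pos ⟨i, hi, rfl⟩]
    rw [h, oneIdx_apply] at h1
    by_cases hji : jf i = lastIdx n
    · rw [← hlast] at hji
      exact hjinj hji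
    · rw [if_neg hji] at h1
      exact absurd h1 (by norm_num)
  have hlastmem : w.1 (lastIdx n) ≠ 0 := by
    intro h0
    have h1 : (oneIdx n hk (lastIdx n)).1 (lastIdx n) = 1 := by
      rw [oneIdx_apply, if_pos rfl]
    rw [← h, uIdx_apply] at h1
    by_cases hex : ∃ i, w.1 i ≠ 0 ∧ jf i = lastIdx n
    · obtain ⟨i, hi, hji⟩ := hex
      exact hi ((hsupp i hi) ▸ h0)
    · rw [if_neg hex] at h1
      exact absurd h1 (by norm_num)
  apply Subtype.ext
  funext i
  rw [oneIdx_apply]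
  by_cases hil : i = lastIdx n
  · subst hil
    rw [if_pos rfl]
    rcases hA (lastIdx n) with h0 | hp
    · exact absurd h0 hlastmem
    · rw [hp, hklast]
      norm_num
  · rw [if_neg hil]
    by_contra hi
    exact hil (hsupp i hi)

lemma k_eq_one_of_adm_ind (hk : ∀ i, 1 ≤ kfun n i) {w : MIdx n} (hA : Adm n w)
    (hI : ∀ i, w.1 i = 0 ∨ w.1 i = 1) {j : Fin (2 ^ (n-1))} (hj : w.1 j ≠ 0) :
    kfun n j = 1 := by
  have h1 : w.1 j = 1 := (hI j).resolve_left hj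
  have h2 : w.1 j = 2 ^ (kfun n j - 1) := (hA j).resolve_left hj
  have h3 : 2 ^ (kfun n j - 1) = 1 := h2 ▸ h1
  have hkj := hk j
  by_contra hne
  have : 2 ≤ kfun n j := by omega
  have : (2:ℕ) ≤ 2 ^ (kfun n j - 1) := by
    calc (2:ℕ) = 2 ^ 1 := by norm_num
    _ ≤ 2 ^ (kfun n j - 1) := Nat.pow_le_pow_right (by norm_num) (by omega)
  omega

lemma uIdx_ind (hk : ∀ i, 1 ≤ kfun n i) (jf : Fin (2 ^ (n - 1)) → Fin (2 ^ (n - 1)))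
    (t : MIdx n) (i : Fin (2 ^ (n-1))) :
    (uIdx n hk jf t).1 i = 0 ∨ (uIdx n hk jf t).1 i = 1 := by
  rw [uIdx_apply]
  split
  · right; rfl
  · left; rfl

lemma adm_zero : Adm n (zeroIdx n) := fun _ => Or.inl rfl

lemma adm_one (hk : ∀ i, 1 ≤ kfun n i) (hklast : kfun n (lastIdx n) = 1) :
    Adm n (oneIdx n hk (lastIdx n)) := by
  intro i
  rw [oneIdx_apply]
  by_cases hil : i = lastIdx n
  · subst hil
    rw [if_pos rfl, hklast]
    right; rfl
  · rw [if_neg hil]; left; rfl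

lemma m_zero : (Finset.univ.filter fun i => (zeroIdx n).1 i ≠ 0).card = 0 := by
  simp [zeroIdx]

lemma m_one (hk : ∀ i, 1 ≤ kfun n i) :
    (Finset.univ.filter fun i => (oneIdx n hk (lastIdx n)).1 i ≠ 0).card = 1 := by
  have hfun : (fun i => (oneIdx n hk (lastIdx n)).1 i ≠ 0) = (fun i => i = lastIdx n) := by
    funext i
    rw [oneIdx_apply]
    by_cases hil : i = lastIdx n <;> simp [hil]
  have hset : (Finset.univ.filter fun i => (oneIdx n hk (lastIdx n)).1 i ≠ 0) = {lastIdx n} := by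
    ext i
    simp only [Finset.mem_filter, Finset.mem_univ, true_and, Finset.mem_singleton, oneIdx_apply]
    by_cases hil : i = lastIdx n <;> simp [hil]
  rw [hset, Finset.card_singleton]

lemma ll_sq_zero {c : LL} (h : c = c ^ 2) : c = 0 ∨ c = 1 := by
  have h0 : c * (c - 1) = 0 := by linear_combination -h
  rcases mul_eq_zero.mp h0 with h1 | h1
  · exact Or.inl h1
  · right; linear_combination h1

open LaurentPolynomial in
lemma ll_sq_one {c : LL} (h : c = T 1 * c ^ 2) : c = 0 ∨ c = T (-1) := by
  have h0 : c * (T 1 * c - 1) = 0 := by linear_combination -h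
  rcases mul_eq_zero.mp h0 with h1 | h1
  · exact Or.inl h1
  · right
    have h2 : T 1 * c = 1 := by linear_combination h1
    calc c = (T (-1) * T 1) * c := by rw [← T_add]; norm_num
    _ = T (-1) * (T 1 * c) := mul_assoc _ _ _
    _ = T (-1) := by rw [h2, mul_one]

lemma two_eq_zero_LL : (2 : LL) = 0 := by
  have h := map_natCast (algebraMap (ZMod 2) LL) 2
  rw [show ((2:ℕ) : ZMod 2) = 0 by decide] at h
  simpa using h.symm

end Aux


/-- **Idempotents of `K(n)*(SO_{2^(n+1)-1})^∨`** (Proposition `idem-answer`).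
Let `A` be the commutative `F₂[v,v⁻¹]`-algebra, free with basis `{γ_t}` indexed by the
tuples `t` with `0 ≤ t_i < 2^(k_i)` (`1 ≤ i ≤ 2^(n-1)`), with `γ_0 = 1` and squares of
basis elements given by: `γ_t² = v^|S| γ_u` when every `t_i ∈ {0, 2^(k_i - 1)}` (where
`S = {i : t_i ≠ 0}` and `u` has `u_{j(i)} = 1` for `i ∈ S`, zero elsewhere), and
`γ_t² = 0` otherwise.  Then the only idempotent elements of `A` are `0`, `1`,
`v⁻¹·α_{2^n-1}` and `1 + v⁻¹·α_{2^n-1}`. -/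
theorem stmt4 (n : ℕ) (hn : 1 ≤ n) (hk : ∀ i, 1 ≤ kfun n i)
    (jf : Fin (2 ^ (n - 1)) → Fin (2 ^ (n - 1)))
    (hjf : ∀ i, 2 * ((jf i : ℕ) + 1) + 2 ^ n = (2 * (i : ℕ) + 1) * 2 ^ kfun n i + 2)
    (hjinj : Function.Injective jf)
    (A : Type) [CommRing A] [Algebra LL A]
    (b : Module.Basis (MIdx n) LL A)
    (hone : b (zeroIdx n) = 1)
    (hsq : ∀ t : MIdx n, (∀ i, t.1 i = 0 ∨ t.1 i = 2 ^ (kfun n i - 1)) →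
      b t ^ 2 = (LaurentPolynomial.T 1 : LL) ^
          (Finset.univ.filter fun i => t.1 i ≠ 0).card • b (uIdx n hk jf t))
    (hsq0 : ∀ t : MIdx n, ¬ (∀ i, t.1 i = 0 ∨ t.1 i = 2 ^ (kfun n i - 1)) →
      b t ^ 2 = 0) :
    ∀ e : A, e ^ 2 = e ↔
      e = 0 ∨ e = 1 ∨
        e = (LaurentPolynomial.T (-1) : LL) • b (oneIdx n hk (lastIdx n)) ∨
        e = 1 + (LaurentPolynomial.T (-1) : LL) • b (oneIdx n hk (lastIdx n)) := by
  have h2A : (2 : A) = 0 := by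
    rw [← map_ofNat (algebraMap LL A) 2, two_eq_zero_LL, map_zero]
  have hklast := (last_facts n hn hk jf hjf).1
  have hjlast := (last_facts n hn hk jf hjf).2
  set z₁ : MIdx n := oneIdx n hk (lastIdx n) with hz₁def
  have hz01 : zeroIdx n ≠ z₁ := by
    intro h
    have h2 := congrArg (fun t : MIdx n => t.1 (lastIdx n)) h
    rw [hz₁def] at h2
    simp [zeroIdx, oneIdx_apply] at h2
  have hfrob : ∀ (s : Finset (MIdx n)) (f : MIdx n → A),
      (∑ w ∈ s, f w) ^ 2 = ∑ w ∈ s, (f w) ^ 2 := by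
    intro s f
    induction s using Finset.cons_induction with
    | empty => simp
    | cons a s ha ih =>
      rw [Finset.sum_cons, Finset.sum_cons, ← ih]
      linear_combination (f a * ∑ w ∈ s, f w) * h2A
  have hy : b z₁ ^ 2 = (LaurentPolynomial.T 1 : LL) • b z₁ := by
    have h := hsq z₁ (adm_one n hk hklast)
    rw [m_one n hk, pow_one, uIdx_one n hk jf hjlast] at h
    exact h
  have hyy : ((LaurentPolynomial.T (-1) : LL) • b z₁) ^ 2
      = (LaurentPolynomial.T (-1) : LL) • b z₁ := by
    rw [smul_pow, hy, smul_smul]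
    congr 1
    rw [pow_two, mul_assoc, ← LaurentPolynomial.T_add, ← LaurentPolynomial.T_add]
    norm_num
  intro e
  constructor
  · intro he
    set c : MIdx n →₀ LL := b.repr e with hc
    have hrepr : e = ∑ w ∈ c.support, c w • b w := by
      conv_lhs => rw [← b.linearCombination_repr e]
      rw [Finsupp.linearCombination_apply, Finsupp.sum]
    have he2 : e = ∑ w ∈ c.support,
        (if Adm n w then
          (((LaurentPolynomial.T 1 : LL) ^ (Finset.univ.filter fun i => w.1 i ≠ 0).card
            * (c w) ^ 2) • b (uIdx n hk jf w)) else 0) := by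
      conv_lhs => rw [← he]
      calc e ^ 2 = (∑ w ∈ c.support, c w • b w) ^ 2 := by rw [← hrepr]
      _ = ∑ w ∈ c.support, (c w • b w) ^ 2 := hfrob _ _
      _ = _ := by
        apply Finset.sum_congr rfl
        intro w _
        by_cases hA : Adm n w
        · rw [if_pos hA, smul_pow, hsq w hA, smul_smul, mul_comm]
        · rw [if_neg hA, smul_pow, hsq0 w hA, smul_zero]
    have hE : ∀ z : MIdx n, c z = ∑ w ∈ c.support,
        (if Adm n w then
          (if uIdx n hk jf w = z then
            (LaurentPolynomial.T 1 : LL) ^ (Finset.univ.filter fun i => w.1 i ≠ 0).card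
              * (c w) ^ 2 else 0) else 0) := by
      intro z
      conv_lhs => rw [hc, he2]
      rw [map_sum, Finsupp.finset_sum_apply]
      apply Finset.sum_congr rfl
      intro w _
      by_cases hA : Adm n w
      · rw [if_pos hA, if_pos hA, map_smul, Finsupp.smul_apply, b.repr_self,
          Finsupp.single_apply]
        by_cases hu : uIdx n hk jf w = z
        · rw [if_pos hu, if_pos hu, smul_eq_mul, mul_one]
        · rw [if_neg hu, if_neg hu, smul_eq_mul, mul_zero]
      · rw [if_neg hA, if_neg hA, map_zero]
        rfl
    have hKEY : ∀ z w, Adm n w → uIdx n hk jf w = z →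
        c z = (LaurentPolynomial.T 1 : LL) ^ (Finset.univ.filter fun i => w.1 i ≠ 0).card
          * (c w) ^ 2 := by
      intro z w hA hu
      rw [hE z, Finset.sum_eq_single w]
      · rw [if_pos hA, if_pos hu]
      · intro w' _ hne
        by_cases hA' : Adm n w'
        · by_cases hu' : uIdx n hk jf w' = z
          · exact absurd (uIdx_inj n hk jf hjinj hA' hA (hu'.trans hu.symm)) hne
          · rw [if_pos hA', if_neg hu']
        · rw [if_neg hA']
      · intro hw
        rw [if_pos hA, if_pos hu, Finsupp.notMem_support_iff.mp hw]
        ring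
    have hSTEP : ∀ z, c z ≠ 0 → ∃ w, Adm n w ∧ uIdx n hk jf w = z ∧ c w ≠ 0 := by
      intro z hz
      by_cases hex : ∃ w, Adm n w ∧ uIdx n hk jf w = z
      · obtain ⟨w, hA, hu⟩ := hex
        refine ⟨w, hA, hu, fun h0 => hz ?_⟩
        rw [hKEY z w hA hu, h0]
        ring
      · exfalso
        apply hz
        rw [hE z]
        apply Finset.sum_eq_zero
        intro w _
        by_cases hA : Adm n w
        · rw [if_pos hA, if_neg (fun hu => hex ⟨w, hA, hu⟩)]
        · rw [if_neg hA]
    have hUsupp : ∀ (w : MIdx n) j, (uIdx n hk jf w).1 j ≠ 0 →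
        ∃ i, w.1 i ≠ 0 ∧ jf i = j := by
      intro w j hj
      by_contra hno
      exact hj (by rw [uIdx_apply, if_neg hno])
    have hCH : ∀ (mm : ℕ) (w : MIdx n), c w ≠ 0 → Adm n w →
        (∀ i, w.1 i = 0 ∨ w.1 i = 1) → ∀ j, w.1 j ≠ 0 →
        ∃ i, jf^[mm] i = j ∧ ∀ l ≤ mm, kfun n (jf^[l] i) = 1 := by
      intro mm
      induction mm with
      | zero =>
        intro w _ hA hI j hj
        refine ⟨j, rfl, fun l hl => ?_⟩
        have : l = 0 := by omega
        subst this
        simpa using k_eq_one_of_adm_ind n hk hA hI hj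
      | succ mm ih =>
        intro w hc0 hA hI j hj
        obtain ⟨w', hA', hu', hc'⟩ := hSTEP w hc0
        obtain ⟨w'', hA'', hu'', hc''⟩ := hSTEP w' hc'
        have hI' : ∀ i, w'.1 i = 0 ∨ w'.1 i = 1 := by
          rw [← hu'']
          exact uIdx_ind n hk jf w''
        have hj' : (uIdx n hk jf w').1 j ≠ 0 := by rw [hu']; exact hj
        obtain ⟨i', hi'ne, hi'j⟩ := hUsupp w' j hj'
        obtain ⟨i, hit, hKc⟩ := ih w' hc' hA' hI' i' hi'ne
        refine ⟨i, ?_, ?_⟩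
        · rw [Function.iterate_succ_apply', hit, hi'j]
        · intro l hl
          by_cases hlm : l ≤ mm
          · exact hKc l hlm
          · have : l = mm + 1 := by omega
            subst this
            rw [Function.iterate_succ_apply', hit, hi'j]
            exact k_eq_one_of_adm_ind n hk hA hI hj
    have hvan : ∀ z, z ≠ zeroIdx n → z ≠ z₁ → c z = 0 := by
      intro z h0 h1
      by_contra hz
      obtain ⟨w, hA, hu, hcw⟩ := hSTEP z hz
      obtain ⟨w', hA', hu', hc'⟩ := hSTEP w hcw
      have hIw : ∀ i, w.1 i = 0 ∨ w.1 i = 1 := by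
        rw [← hu']
        exact uIdx_ind n hk jf w'
      by_cases hsupp : ∀ j, w.1 j ≠ 0 → j = lastIdx n
      · by_cases hlastz : w.1 (lastIdx n) = 0
        · have hwz : w = zeroIdx n := by
            apply Subtype.ext
            funext i
            by_contra hi
            exact (hsupp i hi ▸ hi) hlastz
          exact h0 (by rw [← hu, hwz, uIdx_zero])
        · have hwo : w = z₁ := by
            apply Subtype.ext
            funext i
            rw [hz₁def, oneIdx_apply]
            by_cases hil : i = lastIdx n
            · rw [if_pos hil, hil]
              exact (hIw (lastIdx n)).resolve_left hlastz
            · rw [if_neg hil]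
              by_contra hi
              exact hil (hsupp i hi)
          exact h1 (by rw [← hu, hwo, hz₁def, uIdx_one n hk jf hjlast])
      · push_neg at hsupp
        obtain ⟨j, hj0, hjne⟩ := hsupp
        obtain ⟨i, hit, hKc⟩ := hCH n w hcw hA hIw j hj0
        have hx := iter_doubling n hn jf hjf n i hKc
        rw [hit] at hx
        have hp1 : 1 ≤ 2 ^ (n - 1) := Nat.one_le_two_pow
        have h2p := pow_mul_two n hn
        have hjlt : (j : ℕ) < 2 ^ (n - 1) := j.isLt
        have hilt : (i : ℕ) < 2 ^ (n - 1) := i.isLt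
        have hjv : (j : ℕ) ≠ 2 ^ (n - 1) - 1 :=
          fun h => hjne (Fin.ext (by rw [lastIdx_val]; exact h))
        by_cases hi : (i : ℕ) = 2 ^ (n - 1) - 1
        · have hil : i = lastIdx n := Fin.ext (by rw [lastIdx_val]; exact hi)
          rw [hil, Function.iterate_fixed hjlast] at hit
          exact hjne hit.symm
        · have hge : 2 ^ n ≤ 2 ^ n * ((2 ^ (n - 1) - 1) - (i : ℕ)) :=
            Nat.le_mul_of_pos_right _ (by omega)
          generalize hY : 2 ^ n * ((2 ^ (n - 1) - 1) - (i : ℕ)) = Y at hx hge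
          omega
    have hc00 : c (zeroIdx n) = 0 ∨ c (zeroIdx n) = 1 := by
      apply ll_sq_zero
      have h := hKEY (zeroIdx n) (zeroIdx n) (adm_zero n) (uIdx_zero n hk jf)
      rw [m_zero, pow_zero, one_mul] at h
      exact h
    have hc11 : c z₁ = 0 ∨ c z₁ = LaurentPolynomial.T (-1) := by
      apply ll_sq_one
      have h := hKEY z₁ z₁ (adm_one n hk hklast) (uIdx_one n hk jf hjlast)
      rw [m_one n hk, pow_one] at h
      exact h
    have hrepr2 : e = c (zeroIdx n) • (1 : A) + c z₁ • b z₁ := by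
      rw [← hone]
      apply b.repr.injective
      rw [map_add, map_smul, map_smul, b.repr_self, b.repr_self, ← hc]
      ext z
      rw [Finsupp.add_apply, Finsupp.smul_apply, Finsupp.smul_apply,
        Finsupp.single_apply, Finsupp.single_apply]
      simp only [smul_eq_mul, mul_ite, mul_one, mul_zero]
      by_cases h0 : zeroIdx n = z
      · rw [if_pos h0, if_neg (fun h => hz01 (h0.trans h.symm)), ← h0, add_zero]
      · by_cases h1 : z₁ = z
        · rw [if_neg h0, if_pos h1, zero_add, ← h1]
        · rw [if_neg h0, if_neg h1, add_zero,
            hvan z (fun h => h0 h.symm) (fun h => h1 h.symm)]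
    rcases hc00 with h0 | h0 <;> rcases hc11 with h1 | h1
    · left
      rw [hrepr2, h0, h1]
      simp
    · right; right; left
      rw [hrepr2, h0, h1]
      simp
    · right; left
      rw [hrepr2, h0, h1]
      simp
    · right; right; right
      rw [hrepr2, h0, h1]
      simp
  · intro h
    rcases h with h | h | h | h
    · rw [h]; ring
    · rw [h]; ring
    · rw [h]; exact hyy
    · rw [h]
      linear_combination hyy + ((LaurentPolynomial.T (-1) : LL) • b z₁) * h2A

end
end

section
/- Let H be a ℤ-graded commutative F₂[v]-algebra which is finitely generated as an F₂[v]-module, and let I be a homogeneous saturated ideal of H (i.e. v·x ∈ I implies x ∈ I). Then the ideal I⊗H + H⊗I of H⊗_{F₂[v]}H (the submodule generated by all simple tensors having at least one factor in I) is saturated: for every z ∈ H⊗_{F₂[v]}H, if v·z ∈ I⊗H + H⊗I then z ∈ I⊗H + H⊗I. -/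
open TensorProduct

/-- **Saturation of `I⊗H + H⊗I`** (Lemma `sublemma` (2)).
Let `H` be a ℤ-graded commutative `F₂[v]`-algebra (grading by `F₂`-subspaces, `v` of
nonzero degree `d`), finitely generated as an `F₂[v]`-module, and let `I` be a homogeneous
saturated ideal of `H`.  Then the submodule `I⊗H + H⊗I` of `H ⊗_{F₂[v]} H` — the span of
all simple tensors having a factor in `I` — is saturated. -/
theorem stmt8 (d : ℤ) (hd : d ≠ 0)
    (H : Type*) [CommRing H] [Algebra (Polynomial (ZMod 2)) H]
    [Module (ZMod 2) H] [IsScalarTower (ZMod 2) (Polynomial (ZMod 2)) H]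
    [Module.Finite (Polynomial (ZMod 2)) H]
    (ℋ : ℤ → Submodule (ZMod 2) H) [DirectSum.Decomposition ℋ]
    (hone : (1 : H) ∈ ℋ 0)
    (hmul : ∀ (i j : ℤ) (x y : H), x ∈ ℋ i → y ∈ ℋ j → x * y ∈ ℋ (i + j))
    (hshift : ∀ (i : ℤ) (x : H), x ∈ ℋ i →
      (Polynomial.X : Polynomial (ZMod 2)) • x ∈ ℋ (i + d))
    (I : Ideal H)
    (hIhom : ∀ x ∈ I, ∀ i : ℤ, ((DirectSum.decompose ℋ x) i : H) ∈ I)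
    (hIsat : ∀ x : H, (Polynomial.X : Polynomial (ZMod 2)) • x ∈ I → x ∈ I) :
    ∀ z : H ⊗[Polynomial (ZMod 2)] H,
      (Polynomial.X : Polynomial (ZMod 2)) • z ∈
          Submodule.span (Polynomial (ZMod 2))
            {w : H ⊗[Polynomial (ZMod 2)] H | ∃ x y : H, (x ∈ I ∨ y ∈ I) ∧ w = x ⊗ₜ[Polynomial (ZMod 2)] y} →
        z ∈ Submodule.span (Polynomial (ZMod 2))
            {w : H ⊗[Polynomial (ZMod 2)] H | ∃ x y : H, (x ∈ I ∨ y ∈ I) ∧ w = x ⊗ₜ[Polynomial (ZMod 2)] y} := by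
  classical
  have hcomp1 : ∀ (x : H) (i : ℤ), ((DirectSum.decompose ℋ ((Polynomial.X : Polynomial (ZMod 2)) • x)) i : H)
      = (Polynomial.X : Polynomial (ZMod 2)) • ((DirectSum.decompose ℋ x) (i - d) : H) := by
    intro x
    induction x using DirectSum.Decomposition.inductionOn ℋ with
    | zero => intro i; simp
    | @homogeneous j m =>
      intro i
      by_cases h : j + d = i
      · rw [DirectSum.decompose_of_mem_same ℋ (h ▸ hshift j m m.2),
          DirectSum.decompose_of_mem_same ℋ (show (m : H) ∈ ℋ (i - d) by
            rw [show i - d = j by omega]; exact m.2)]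
      · rw [DirectSum.decompose_of_mem_ne ℋ (hshift j m m.2) h,
          DirectSum.decompose_of_mem_ne ℋ m.2 (show j ≠ i - d by omega), smul_zero]
    | add a b ha hb =>
      intro i
      rw [smul_add, DirectSum.decompose_add, DirectSum.decompose_add]
      simp only [DirectSum.add_apply, Submodule.coe_add, ha, hb, smul_add]
  have hcompk : ∀ (k : ℕ) (x : H) (i : ℤ),
      ((DirectSum.decompose ℋ (((Polynomial.X : Polynomial (ZMod 2)) ^ k) • x)) i : H)
      = ((Polynomial.X : Polynomial (ZMod 2)) ^ k) • ((DirectSum.decompose ℋ x) (i - k * d) : H) := by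
    intro k
    induction k with
    | zero => intro x i; rw [show i - (0:ℕ) * d = i by push_cast; ring]; simp
    | succ k ih =>
      intro x i
      rw [pow_succ, mul_comm, mul_smul, hcomp1, ih, ← mul_smul, ← pow_succ',
        show (i - d - (k:ℤ) * d) = i - ((k+1 : ℕ) : ℤ) * d by push_cast; ring]
  -- key: g with constant coefficient 1
  have key2 : ∀ (g : Polynomial (ZMod 2)), g.coeff 0 = 1 → ∀ (n : ℕ) (x : H),
      (DirectSum.decompose ℋ x).support.card ≤ n → g • x ∈ I → x ∈ I := by
    intro g hg n
    induction n with
    | zero =>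
      intro x hcard _
      have hsupp : (DirectSum.decompose ℋ x).support = ∅ := Finset.card_eq_zero.mp (Nat.le_zero.mp hcard)
      have : DirectSum.decompose ℋ x = 0 := DFinsupp.support_eq_empty.mp hsupp
      have hx : x = 0 := by
        have := congrArg (DirectSum.decompose ℋ).symm this
        simpa using this
      rw [hx]; exact I.zero_mem
    | succ n ih =>
      intro x hcard hgx
      by_cases hx0 : x = 0
      · rw [hx0]; exact I.zero_mem
      have hne : (DirectSum.decompose ℋ x).support.Nonempty := by
        rw [Finset.nonempty_iff_ne_empty]
        intro h
        apply hx0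
        have : DirectSum.decompose ℋ x = 0 := DFinsupp.support_eq_empty.mp h
        have := congrArg (DirectSum.decompose ℋ).symm this
        simpa using this
      set S := (DirectSum.decompose ℋ x).support with hS
      have hex : ∃ i₀ ∈ S, ∀ k : ℕ, 1 ≤ k → i₀ - k * d ∉ S := by
        rcases lt_or_gt_of_ne hd with hneg | hpos
        · refine ⟨S.max' hne, S.max'_mem hne, ?_⟩
          intro k hk hmem
          have h1 := S.le_max' _ hmem
          have hk' : (1:ℤ) ≤ (k:ℤ) := by exact_mod_cast hk
          nlinarith
        · refine ⟨S.min' hne, S.min'_mem hne, ?_⟩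
          intro k hk hmem
          have h1 := S.min'_le _ hmem
          have hk' : (1:ℤ) ≤ (k:ℤ) := by exact_mod_cast hk
          nlinarith
      obtain ⟨i₀, hi₀S, hout⟩ := hex
      -- the additive map y ↦ (decompose y i₀ : H)
      let φ : H →+ H :=
        { toFun := fun y => ((DirectSum.decompose ℋ y) i₀ : H)
          map_zero' := by simp
          map_add' := by
            intro a b
            show ((DirectSum.decompose ℋ (a + b)) i₀ : H) = _
            rw [DirectSum.decompose_add]
            simp }
      -- g • x as a sum of X^k • x
      have hgsum : g • x = ∑ k ∈ g.support, ((Polynomial.X : Polynomial (ZMod 2)) ^ k) • x := by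
        conv_lhs => rw [← Polynomial.sum_C_mul_X_pow_eq g]
        rw [Polynomial.sum, Finset.sum_smul]
        refine Finset.sum_congr rfl ?_
        intro k hk
        have h1 : g.coeff k = 1 := by
          have := Polynomial.mem_support_iff.mp hk
          revert this; generalize g.coeff k = a; revert a; decide
        rw [h1, map_one, one_mul]
      have hφ : φ (g • x) = ((DirectSum.decompose ℋ x) i₀ : H) := by
        rw [hgsum, map_sum]
        rw [Finset.sum_eq_single_of_mem 0 (Polynomial.mem_support_iff.mpr (by rw [hg]; exact one_ne_zero))]
        · show ((DirectSum.decompose ℋ (((Polynomial.X : Polynomial (ZMod 2)) ^ 0) • x)) i₀ : H) = _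
          simp
        · intro k _ hk0
          show ((DirectSum.decompose ℋ (((Polynomial.X : Polynomial (ZMod 2)) ^ k) • x)) i₀ : H) = 0
          rw [hcompk]
          have : (DirectSum.decompose ℋ x) (i₀ - k * d) = 0 :=
            DFinsupp.notMem_support_iff.mp (hout k (Nat.one_le_iff_ne_zero.mpr hk0))
          rw [this]
          simp
      have hxi₀ : ((DirectSum.decompose ℋ x) i₀ : H) ∈ I := by
        rw [← hφ]; exact hIhom _ hgx i₀
      -- subtract the i₀ component
      set c : H := ((DirectSum.decompose ℋ x) i₀ : H) with hc
      have hgc : g • c ∈ I := by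
        rw [Algebra.smul_def]; exact I.mul_mem_left _ hxi₀
      have hgx' : g • (x - c) ∈ I := by
        rw [smul_sub]; exact I.sub_mem hgx hgc
      have hcomp' : ∀ j : ℤ, ((DirectSum.decompose ℋ (x - c)) j : H)
          = if j = i₀ then 0 else ((DirectSum.decompose ℋ x) j : H) := by
        intro j
        have hdc : DirectSum.decompose ℋ c = DirectSum.of _ i₀ ((DirectSum.decompose ℋ x) i₀) :=
          DirectSum.decompose_coe ℋ _
        rw [DirectSum.decompose_sub, DirectSum.sub_apply, hdc]
        split
        · next h => subst h; simp
        · next h =>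
          rw [DirectSum.of_eq_of_ne _ _ _ h]
          simp
      have hsub : (DirectSum.decompose ℋ (x - c)).support ⊆ S.erase i₀ := by
        intro j hj
        have hj' := DFinsupp.mem_support_iff.mp hj
        rw [Finset.mem_erase]
        by_cases h : j = i₀
        · exfalso; apply hj'
          have := hcomp' j
          rw [if_pos h] at this
          exact Subtype.ext this
        · refine ⟨h, ?_⟩
          rw [hS, DFinsupp.mem_support_iff]
          intro h0
          apply hj'
          have := hcomp' j
          rw [if_neg h, h0] at this
          exact Subtype.ext (by simpa using this)
      have hcard' : (DirectSum.decompose ℋ (x - c)).support.card ≤ n := by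
        have h1 := Finset.card_le_card hsub
        have h2 := Finset.card_erase_of_mem hi₀S
        omega
      have hxc : x - c ∈ I := ih (x - c) hcard' hgx'
      have : x = (x - c) + c := by ring
      rw [this]
      exact I.add_mem hxc hxi₀
  -- full saturation
  have hsat : ∀ f : Polynomial (ZMod 2), f ≠ 0 → ∀ x : H, f • x ∈ I → x ∈ I := by
    have main : ∀ (n : ℕ) (f : Polynomial (ZMod 2)), f.natDegree ≤ n → f ≠ 0 →
        ∀ x : H, f • x ∈ I → x ∈ I := by
      intro n
      induction n with
      | zero =>
        intro f hdeg hf0 x hfx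
        have hc : f.coeff 0 ≠ 0 := by
          intro h
          apply hf0
          rw [Polynomial.eq_C_of_natDegree_le_zero hdeg, h, map_zero]
        have hc1 : f.coeff 0 = 1 := by revert hc; generalize f.coeff 0 = a; revert a; decide
        exact key2 f hc1 _ x le_rfl hfx
      | succ n ih =>
        intro f hdeg hf0 x hfx
        by_cases hc : f.coeff 0 = 0
        · have hfX : f = Polynomial.X * f.divX := by
            conv_lhs => rw [← Polynomial.X_mul_divX_add f]
            rw [hc, map_zero, add_zero]
          have hdvx : f.divX ≠ 0 := by
            intro h
            apply hf0
            rw [hfX, h, mul_zero]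
          have h1 : f.divX • x ∈ I := by
            apply hIsat
            rw [← mul_smul, ← hfX]
            exact hfx
          refine ih f.divX ?_ hdvx x h1
          have := Polynomial.natDegree_divX_le (p := f)
          have h2 := Polynomial.natDegree_divX_eq_natDegree_tsub_one (p := f)
          omega
        · have hc1 : f.coeff 0 = 1 := by revert hc; generalize f.coeff 0 = a; revert a; decide
          exact key2 f hc1 _ x le_rfl hfx
    exact fun f hf0 x => main f.natDegree f le_rfl hf0 x
  -- the quotient module
  haveI : Fact (Nat.Prime 2) := ⟨by norm_num⟩
  set R := Polynomial (ZMod 2)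
  set J : Submodule R H := Submodule.restrictScalars R I with hJ
  set Q := H ⧸ J with hQdef
  haveI : Module.Finite R Q := Module.Finite.quotient R J
  haveI : NoZeroSMulDivisors R Q := by
    refine ⟨fun {c} {x} hcx => ?_⟩
    by_cases hc : c = 0
    · exact Or.inl hc
    · refine Or.inr ?_
      obtain ⟨y, rfl⟩ := Submodule.Quotient.mk_surjective J x
      rw [show c • (Submodule.Quotient.mk y : H ⧸ J) = Submodule.Quotient.mk (c • y) from rfl,
        Submodule.Quotient.mk_eq_zero] at hcx
      rw [Submodule.Quotient.mk_eq_zero]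
      exact hsat c hc y hcx
  haveI : Module.Free R Q := Module.free_of_finite_type_torsion_free'
  haveI : NoZeroSMulDivisors R (Q ⊗[R] Q) := ⟨fun {c} {x} h => smul_eq_zero.mp h⟩
  -- the map Φ
  set π : H →ₗ[R] Q := J.mkQ with hπ
  set Φ : H ⊗[R] H →ₗ[R] Q ⊗[R] Q := TensorProduct.map π π with hΦ
  set Sp := Submodule.span R
      {w : H ⊗[R] H | ∃ x y : H, (x ∈ I ∨ y ∈ I) ∧ w = x ⊗ₜ[R] y} with hSp
  have hker : LinearMap.ker Φ = Sp := by
    have hk := TensorProduct.map_ker (LinearMap.exact_subtype_mkQ J) (Submodule.mkQ_surjective J)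
      (LinearMap.exact_subtype_mkQ J) (Submodule.mkQ_surjective J)
    rw [hΦ, hk]
    apply le_antisymm
    · apply sup_le
      · rintro w ⟨u, rfl⟩
        induction u using TensorProduct.induction_on with
        | zero => simp [Submodule.zero_mem]
        | tmul a b =>
          apply Submodule.subset_span
          exact ⟨a, b, Or.inr b.2, by simp⟩
        | add u v hu hv => rw [map_add]; exact Sp.add_mem hu hv
      · rintro w ⟨u, rfl⟩
        induction u using TensorProduct.induction_on with
        | zero => simp [Submodule.zero_mem]
        | tmul a b =>
          apply Submodule.subset_span
          exact ⟨a, b, Or.inl a.2, by simp⟩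
        | add u v hu hv => rw [map_add]; exact Sp.add_mem hu hv
    · rw [Submodule.span_le]
      rintro w ⟨x, y, hxy | hxy, rfl⟩
      · apply Submodule.mem_sup_right
        exact ⟨(⟨x, hxy⟩ : J) ⊗ₜ[R] y, rfl⟩
      · apply Submodule.mem_sup_left
        exact ⟨x ⊗ₜ[R] (⟨y, hxy⟩ : J), rfl⟩
  intro z hz
  rw [← hker] at hz ⊢
  rw [LinearMap.mem_ker] at hz ⊢
  rw [map_smul] at hz
  rcases smul_eq_zero.mp hz with h | h
  · exact absurd h Polynomial.X_ne_zero
  · exact h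
end

section
/- Let n ≥ 1 and t ≥ 1 be integers, let a₁ < a₂ < … < a_t be natural numbers, and set k = 2^{a₁} + 2^{a₂} + … + 2^{a_t}; assume 2k < 2ⁿ. Then for every index i with 0 ≤ i ≤ t−1, the binomial coefficient C(2ⁿ − 1 − 2k + 2^{a₁} + … + 2^{a_i}, 2^{a_{i+1}}) is odd (for i = 0 the sum 2^{a₁}+…+2^{a_i} is empty). -/
private lemma sum_two_pow_range (m : ℕ) : ∑ x ∈ Finset.range m, 2 ^ x = 2 ^ m - 1 := by
  induction m with
  | zero => simp
  | succ m ih =>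
    rw [Finset.sum_range_succ, ih]
    have : 1 ≤ 2 ^ m := Nat.one_le_two_pow
    have : 2 ^ (m + 1) = 2 * 2 ^ m := by ring
    omega

private lemma odd_choose_two_pow {m b : ℕ} (h : Odd (m / 2 ^ b)) :
    Odd (m.choose (2 ^ b)) := by
  haveI : Fact (Nat.Prime 2) := ⟨Nat.prime_two⟩
  have H := Choose.choose_modEq_choose_mul_prod_range_choose (p := 2) (n := m) (k := 2 ^ b) b
  have hprod : ∀ i ∈ Finset.range b,
      Nat.choose (m / 2 ^ i % 2) (2 ^ b / 2 ^ i % 2) = 1 := by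
    intro i hi
    rw [Finset.mem_range] at hi
    have h1 : 2 ^ b / 2 ^ i = 2 ^ (b - i) := (Nat.pow_div hi.le two_pos)
    obtain ⟨s, hs⟩ : ∃ s, b - i = s + 1 := ⟨b - i - 1, by omega⟩
    rw [h1, hs, pow_succ, Nat.mul_mod_left, Nat.choose_zero_right]
  have hdiv : 2 ^ b / 2 ^ b = 1 := Nat.div_self (pow_pos two_pos b)
  rw [hdiv, Nat.choose_one_right] at H
  rw [Finset.prod_congr rfl hprod, Finset.prod_const_one, Nat.cast_one, mul_one] at H
  have H2 : (Nat.choose m (2 ^ b) : ℤ) ≡ (m / 2 ^ b : ℕ) [ZMOD 2] := H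
  have H3 : Nat.choose m (2 ^ b) ≡ m / 2 ^ b [MOD 2] := by
    rwa [← Int.natCast_modEq_iff]
  rw [Nat.odd_iff] at h ⊢
  rw [Nat.ModEq] at H3
  omega

/-- **Odd binomial coefficients** (Appendix A3).
Let `n ≥ 1`, `t ≥ 1`, let `a 0 < a 1 < ⋯ < a (t-1)` be natural numbers and set
`k = 2^(a 0) + ⋯ + 2^(a (t-1))`; assume `2k < 2^n`.  Then for every `i < t` the binomial
coefficient `C(2^n - 1 - 2k + 2^(a 0) + ⋯ + 2^(a (i-1)), 2^(a i))` is odd. -/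
theorem stmt12 (n t : ℕ) (hn : 1 ≤ n) (ht : 1 ≤ t)
    (a : ℕ → ℕ) (hmono : ∀ i j : ℕ, i < j → j < t → a i < a j)
    (k : ℕ) (hk : k = ∑ i ∈ Finset.range t, 2 ^ a i)
    (h2k : 2 * k < 2 ^ n) :
    ∀ i < t, Odd (Nat.choose (2 ^ n - 1 - 2 * k + ∑ j ∈ Finset.range i, 2 ^ a j)
      (2 ^ a i)) := by
  intro i hi
  set b := a i with hb
  set S := ∑ j ∈ Finset.range i, 2 ^ a j with hS
  set T := ∑ j ∈ Finset.Ico i t, 2 ^ (a j + 1) with hT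
  -- S < 2 ^ b
  have hSlt : S < 2 ^ b := by
    have hinj : ∀ x ∈ Finset.range i, ∀ y ∈ Finset.range i, a x = a y → x = y := by
      intro x hx y hy hxy
      rw [Finset.mem_range] at hx hy
      by_contra hne
      rcases Nat.lt_or_ge x y with h | h
      · exact absurd hxy (Nat.ne_of_lt (hmono x y h (by omega)))
      · have : x ≠ y := hne
        exact absurd hxy.symm (Nat.ne_of_lt (hmono y x (by omega) (by omega)))
    have h1 : S = ∑ x ∈ (Finset.range i).image a, 2 ^ x := (Finset.sum_image hinj).symm
    have h2 : (Finset.range i).image a ⊆ Finset.range b := by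
      intro x hx
      rw [Finset.mem_image] at hx
      obtain ⟨j, hj, rfl⟩ := hx
      rw [Finset.mem_range] at hj ⊢
      exact hmono j i hj hi
    calc S ≤ ∑ x ∈ Finset.range b, 2 ^ x := by
          rw [h1]
          exact Finset.sum_le_sum_of_subset h2
      _ = 2 ^ b - 1 := sum_two_pow_range b
      _ < 2 ^ b := by have : 1 ≤ 2 ^ b := Nat.one_le_two_pow; omega
  -- 2k = 2S + T
  have hk2 : 2 * k = 2 * S + T := by
    have h1 : 2 * k = ∑ j ∈ Finset.range t, 2 ^ (a j + 1) := by
      rw [hk, Finset.mul_sum]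
      exact Finset.sum_congr rfl fun j _ => by rw [pow_succ]; ring
    have h2 : ∑ j ∈ Finset.range i, 2 ^ (a j + 1) + T = ∑ j ∈ Finset.range t, 2 ^ (a j + 1) := by
      rw [Finset.range_eq_Ico, Finset.range_eq_Ico]
      exact Finset.sum_Ico_consecutive (fun j => 2 ^ (a j + 1)) (Nat.zero_le i) hi.le
    have h3 : ∑ j ∈ Finset.range i, 2 ^ (a j + 1) = 2 * S := by
      rw [hS, Finset.mul_sum]
      exact Finset.sum_congr rfl fun j _ => by rw [pow_succ]; ring
    omega
  -- divisibility of T by 2 * 2 ^ b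
  have hdvdT : 2 * 2 ^ b ∣ T := by
    apply Finset.dvd_sum
    intro j hj
    rw [Finset.mem_Ico] at hj
    have hab : b ≤ a j := by
      rcases Nat.eq_or_lt_of_le hj.1 with h | h
      · rw [hb, h]
      · exact (hmono i j h hj.2).le
    have : (2 : ℕ) * 2 ^ b = 2 ^ (b + 1) := by ring
    rw [this]
    exact pow_dvd_pow 2 (by omega)
  -- 2 ^ (b+1) ≤ 2 * k, hence b + 1 < n
  have hbk : 2 ^ b ≤ k := by
    rw [hk]
    exact Finset.single_le_sum (f := fun j => 2 ^ a j) (fun _ _ => Nat.zero_le _)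
      (Finset.mem_range.mpr hi)
  have hbn : b + 1 < n := by
    have h1 : 2 ^ (b + 1) < 2 ^ n := by
      have : (2 : ℕ) ^ (b + 1) = 2 * 2 ^ b := by ring
      omega
    exact (Nat.pow_lt_pow_iff_right one_lt_two).mp h1
  have hdvdn : 2 * 2 ^ b ∣ 2 ^ n := by
    have : (2 : ℕ) * 2 ^ b = 2 ^ (b + 1) := by ring
    rw [this]
    exact pow_dvd_pow 2 (by omega)
  have hTle : T ≤ 2 * k := by omega
  obtain ⟨B, hB⟩ := Nat.dvd_sub hdvdn hdvdT
  have hBpos : 1 ≤ B := by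
    rcases Nat.eq_zero_or_pos B with h | h
    · subst h; simp at hB; omega
    · exact h
  obtain ⟨B', rfl⟩ : ∃ B', B = B' + 1 := ⟨B - 1, by omega⟩
  have hu : 2 * 2 ^ b * (B' + 1) = 2 * (2 ^ b * B') + 2 * 2 ^ b := by ring
  rw [hu] at hB
  -- key decomposition
  have hM : 2 ^ n - 1 - 2 * k + S = 2 * (2 ^ b * B') + 2 ^ b + (2 ^ b - 1 - S) := by omega
  have hM2 : 2 * (2 ^ b * B') + 2 ^ b = 2 ^ b * (2 * B' + 1) := by ring
  apply odd_choose_two_pow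
  have hdiv : (2 ^ n - 1 - 2 * k + S) / 2 ^ b = 2 * B' + 1 := by
    rw [hM, hM2, Nat.mul_add_div (pow_pos two_pos b),
      Nat.div_eq_of_lt (by omega), add_zero]
  rw [hdiv]
  exact ⟨B', by ring⟩
end
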